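/- arXiv:0903.1280 — 6 statements merged into one kernel-verified Lean document; each statement's English description precedes it below -/
import Mathlib

section
/- There do not exist positive integers x, y, z, w satisfying both z^2 = w^2 + y^2 and w^2 = y^2 + x^2. -/
set_option maxHeartbeats 1000000

private lemma nat_sq_of_coprime {a b c : ℕ} (h : Nat.Coprime a b) (heq : a * b = c ^ 2) :
    ∃ d, a = d ^ 2 := by
  have h' : IsCoprime (a : ℤ) (b : ℤ) := by
    rw [Int.isCoprime_iff_gcd_eq_one, Int.gcd_natCast_natCast]
    exact h
  have heq' : (a : ℤ) * b = (c : ℤ) ^ 2 := by exact_mod_cast heq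
  obtain ⟨d, hd | hd⟩ := Int.sq_of_isCoprime h' heq'
  · refine ⟨d.natAbs, ?_⟩
    have : (a : ℤ) = (d.natAbs : ℤ) ^ 2 := by
      rw [hd, ← Int.natAbs_sq d]
    exact_mod_cast this
  · have h0 : (a : ℤ) ≤ 0 := by nlinarith [sq_nonneg d]
    have h1 : (0:ℤ) ≤ (a:ℤ) := Int.natCast_nonneg a
    have ha : a = 0 := by exact_mod_cast le_antisymm h0 h1
    exact ⟨0, by simp [ha]⟩

private lemma sq_mod_four (n : ℕ) : n ^ 2 % 4 = 0 ∨ n ^ 2 % 4 = 1 := by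
  have h := Nat.pow_mod n 2 4
  have h2 : n % 4 < 4 := Nat.mod_lt _ (by norm_num)
  interval_cases h' : n % 4 <;> omega

private lemma odd_sq_mod_four {n : ℕ} (h : n % 2 = 1) : n ^ 2 % 4 = 1 := by
  have h1 := Nat.pow_mod n 2 4
  have h2 : n % 4 < 4 := Nat.mod_lt _ (by norm_num)
  have h3 : n % 4 % 2 = n % 2 := Nat.mod_mod_of_dvd n (by norm_num)
  interval_cases h' : n % 4 <;> omega

private lemma odd_sq_odd {n : ℕ} (h : n % 2 = 1) : n ^ 2 % 2 = 1 := by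
  have := Nat.pow_mod n 2 2
  rw [h] at this
  simpa using this

private lemma nat_odd {n : ℕ} (h : n ^ 2 % 2 = 1) : n % 2 = 1 := by
  have h2 := Nat.pow_mod n 2 2
  have h3 : n % 2 = 0 ∨ n % 2 = 1 := by omega
  rcases h3 with h3 | h3
  · rw [h3] at h2; simp at h2; omega
  · exact h3

-- Case B auxiliary
private lemma subcaseB {w M N y : ℕ} (hw : 0 < w) (hM : 0 < M) (hN : 0 < N)
    (hMo : M % 2 = 1) (hco : Nat.Coprime M N) (hNe : N % 2 = 0)
    (h1 : y ^ 2 = 2 * M * N) (h2 : w ^ 2 = M ^ 2 + N ^ 2) :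
    ∃ r s a : ℕ, r < w ∧ 0 < s ∧ 0 < a ∧ r ^ 4 = s ^ 4 + a ^ 2 := by
  obtain ⟨K, hK⟩ : ∃ K, N = 2 * K := ⟨N / 2, by omega⟩
  have hKpos : 0 < K := by omega
  have hy2 : 2 ∣ y := by
    have h4 : 2 ∣ y ^ 2 := ⟨2 * M * K, by rw [h1, hK]; ring⟩
    exact Nat.Prime.dvd_of_dvd_pow Nat.prime_two h4
  obtain ⟨t, ht⟩ := hy2
  have htMK : M * K = t ^ 2 := by
    have h5 : (2 * t) ^ 2 = 2 * M * (2 * K) := by rw [← ht, h1, hK]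
    ring_nf at h5
    omega
  have hcoMK : Nat.Coprime M K := Nat.Coprime.coprime_dvd_right ⟨2, by omega⟩ hco
  obtain ⟨a, ha⟩ := nat_sq_of_coprime hcoMK htMK
  obtain ⟨b, hb⟩ := nat_sq_of_coprime hcoMK.symm (by rw [mul_comm]; exact htMK)
  have hapos : 0 < a := by
    rcases Nat.eq_zero_or_pos a with h | h
    · rw [h] at ha; simp at ha; omega
    · exact h
  have hbpos : 0 < b := by
    rcases Nat.eq_zero_or_pos b with h | h
    · rw [h] at hb; simp at hb; omega
    · exact h
  have haodd : a % 2 = 1 := nat_odd (ha ▸ hMo)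
  have h2'' : w ^ 2 = (a ^ 2) ^ 2 + (2 * b ^ 2) ^ 2 := by rw [h2, ha, hK, hb]
  have h2z : ((w : ℤ)) ^ 2 = ((a : ℤ) ^ 2) ^ 2 + (2 * (b : ℤ) ^ 2) ^ 2 := by
    exact_mod_cast h2''
  have hT : PythagoreanTriple ((a : ℤ) ^ 2) (2 * (b : ℤ) ^ 2) ((w : ℤ)) := by
    delta PythagoreanTriple
    linear_combination -h2z
  have hcoab : Nat.Coprime (a ^ 2) (2 * b ^ 2) := by
    have c1 : Nat.Coprime (a ^ 2) 2 := by
      have h5 : Nat.Coprime a 2 := by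
        exact Nat.coprime_two_right.mpr (Nat.odd_iff.mpr haodd)
      exact h5.pow_left 2
    have c2 : Nat.Coprime (a ^ 2) (b ^ 2) := by
      have h6 : Nat.Coprime M K := hcoMK
      rw [ha, hb] at h6
      exact h6
    exact Nat.Coprime.mul_right c1 c2
  have hgcd : Int.gcd ((a : ℤ) ^ 2) (2 * (b : ℤ) ^ 2) = 1 := by
    rw [show ((a : ℤ) ^ 2) = ((a ^ 2 : ℕ) : ℤ) by push_cast; ring,
       show (2 * (b : ℤ) ^ 2) = ((2 * b ^ 2 : ℕ) : ℤ) by push_cast; ring,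
       Int.gcd_natCast_natCast]
    exact hcoab
  have hxodd : ((a : ℤ) ^ 2) % 2 = 1 := by
    have h7 := odd_sq_odd haodd
    have h8 : ((a ^ 2 % 2 : ℕ) : ℤ) = ((a ^ 2 : ℕ) : ℤ) % 2 := Int.natCast_mod _ _
    have h9 : ((a ^ 2 : ℕ) : ℤ) = (a : ℤ) ^ 2 := by push_cast; ring
    omega
  have hzpos : (0 : ℤ) < ((w : ℤ)) := by exact_mod_cast hw
  obtain ⟨p, q, hx, hy, hz, hpq, _, hp⟩ := hT.coprime_classification' hgcd hxodd hzpos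
  have hpqpos : 0 < p * q := by
    have hb2 : (0 : ℤ) < 2 * (b : ℤ) ^ 2 := by positivity
    linarith [hy ▸ hb2]
  have hppos : 0 < p := lt_of_le_of_ne hp (by rintro rfl; simp at hpqpos)
  have hqpos : 0 < q := by
    rcases mul_pos_iff.mp hpqpos with ⟨_, h⟩ | ⟨h, _⟩
    · exact h
    · linarith
  set P := p.natAbs with hPdef
  set Q := q.natAbs with hQdef
  have hPp : (P : ℤ) = p := Int.natAbs_of_nonneg hppos.le
  have hQq : (Q : ℤ) = q := Int.natAbs_of_nonneg hqpos.le
  have hPQb : P * Q = b ^ 2 := by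
    have h10 : ((P * Q : ℕ) : ℤ) = ((b ^ 2 : ℕ) : ℤ) := by
      push_cast [hPp, hQq]
      linarith [hy]
    exact_mod_cast h10
  have hPaQ : P ^ 2 = a ^ 2 + Q ^ 2 := by
    have h10 : ((P ^ 2 : ℕ) : ℤ) = ((a ^ 2 + Q ^ 2 : ℕ) : ℤ) := by
      push_cast [hPp, hQq]
      linarith [hx]
    exact_mod_cast h10
  have hwPQ : w = P ^ 2 + Q ^ 2 := by
    have h10 : ((w : ℕ) : ℤ) = ((P ^ 2 + Q ^ 2 : ℕ) : ℤ) := by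
      push_cast [hPp, hQq]
      exact hz
    exact_mod_cast h10
  have hcoPQ : Nat.Coprime P Q := by
    have h10 : Nat.gcd P Q = 1 := by
      rw [← Int.gcd_natCast_natCast, hPp, hQq]
      exact hpq
    exact h10
  obtain ⟨r, hr⟩ := nat_sq_of_coprime hcoPQ hPQb
  obtain ⟨s, hs⟩ := nat_sq_of_coprime hcoPQ.symm (by rw [mul_comm]; exact hPQb)
  have hQpos : 0 < Q := by
    have h10 : (0 : ℤ) < (Q : ℤ) := hQq ▸ hqpos
    exact_mod_cast h10
  have hPpos : 0 < P := by
    have h10 : (0 : ℤ) < (P : ℤ) := hPp ▸ hppos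
    exact_mod_cast h10
  have hspos : 0 < s := by
    rcases Nat.eq_zero_or_pos s with h | h
    · rw [h] at hs; simp at hs; omega
    · exact h
  refine ⟨r, s, a, ?_, hspos, hapos, ?_⟩
  · have h9 : r ≤ r ^ 2 := Nat.le_self_pow (by norm_num) r
    have h10 : P ≤ P ^ 2 := Nat.le_self_pow (by norm_num) P
    have h11 : 1 ≤ Q ^ 2 := pow_pos hQpos 2
    omega
  · have h12 : (r ^ 2) ^ 2 = a ^ 2 + (s ^ 2) ^ 2 := by rw [← hr, ← hs]; exact hPaQ
    have e1 : r ^ 4 = (r ^ 2) ^ 2 := by ring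
    have e2 : s ^ 4 = (s ^ 2) ^ 2 := by ring
    omega

private lemma no_diff : ∀ w : ℕ, ∀ y c : ℕ, 0 < y → 0 < c → w ^ 4 ≠ y ^ 4 + c ^ 2 := by
  intro w
  induction w using Nat.strong_induction_on with
  | _ w IH =>
  intro y c hy hc heq
  have hy4 : 0 < y ^ 4 := pow_pos hy 4
  have hw : 0 < w := by
    rcases Nat.eq_zero_or_pos w with h | h
    · rw [h] at heq; simp at heq; omega
    · exact h
  by_cases hgcd : Nat.gcd w y = 1
  · -- coprime case
    have hco : Nat.Coprime w y := hgcd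
    have hcyc : Nat.Coprime y c := by
      have h1 : Nat.gcd y c ∣ y ^ 4 := (Nat.gcd_dvd_left y c).trans (dvd_pow_self y (by norm_num))
      have h2 : Nat.gcd y c ∣ c ^ 2 := (Nat.gcd_dvd_right y c).trans (dvd_pow_self c (by norm_num))
      have h3 : Nat.gcd y c ∣ w ^ 4 := heq ▸ Nat.dvd_add h1 h2
      have h4 : Nat.Coprime (y ^ 4) (w ^ 4) := Nat.Coprime.pow 4 4 hco.symm
      have h5 := Nat.dvd_gcd h1 h3
      rw [Nat.Coprime.gcd_eq_one h4] at h5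
      exact Nat.dvd_one.mp h5
    have hcy2c : Nat.Coprime (y ^ 2) c := hcyc.pow_left 2
    have hwodd : w % 2 = 1 := by
      by_contra h
      have hwe : w % 2 = 0 := by omega
      have hyo : y % 2 = 1 := by
        by_contra h'
        have : 2 ∣ Nat.gcd w y := Nat.dvd_gcd (by omega) (by omega)
        rw [hgcd] at this
        omega
      have h1 : w ^ 4 % 4 = 0 := by
        obtain ⟨k, hk⟩ : ∃ k, w = 2 * k := ⟨w / 2, by omega⟩
        have e : w ^ 4 = 4 * (4 * k ^ 4) := by rw [hk]; ring
        omega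
      have h2 : y ^ 4 % 4 = 1 := by
        have h5 := odd_sq_mod_four (odd_sq_odd hyo)
        have e : y ^ 4 = (y ^ 2) ^ 2 := by ring
        omega
      have h3 := sq_mod_four c
      omega
    have hw4odd : w ^ 4 % 2 = 1 := by
      have h5 := odd_sq_odd (odd_sq_odd hwodd)
      have e : w ^ 4 = (w ^ 2) ^ 2 := by ring
      omega
    have hzpos : (0 : ℤ) < (w : ℤ) ^ 2 := by
      have : (0 : ℤ) < (w : ℤ) := by exact_mod_cast hw
      positivity
    rcases Nat.even_or_odd y with hye | hyo
    · -- y even: case B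
      have hyE : y % 2 = 0 := Nat.even_iff.mp hye
      have hcodd : c % 2 = 1 := by
        have h2 : y ^ 4 % 2 = 0 := by
          obtain ⟨k, hk⟩ : ∃ k, y = 2 * k := ⟨y / 2, by omega⟩
          have e : y ^ 4 = 2 * (8 * k ^ 4) := by rw [hk]; ring
          omega
        have h3 := Nat.pow_mod c 2 2
        have h4 : c % 2 = 0 ∨ c % 2 = 1 := by omega
        rcases h4 with h4 | h4
        · rw [h4] at h3; simp at h3; omega
        · exact h4
      have hT : PythagoreanTriple ((c : ℤ)) ((y : ℤ) ^ 2) ((w : ℤ) ^ 2) := by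
        delta PythagoreanTriple
        have h5 : ((w : ℤ)) ^ 4 = (y : ℤ) ^ 4 + (c : ℤ) ^ 2 := by exact_mod_cast heq
        linear_combination -h5
      have hgcd2 : Int.gcd ((c : ℤ)) ((y : ℤ) ^ 2) = 1 := by
        rw [show ((y : ℤ) ^ 2) = ((y ^ 2 : ℕ) : ℤ) by push_cast; ring,
           Int.gcd_natCast_natCast]
        exact hcy2c.symm
      have hxodd : ((c : ℤ)) % 2 = 1 := by
        have h8 : ((c % 2 : ℕ) : ℤ) = (c : ℤ) % 2 := Int.natCast_mod _ _
        omega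
      obtain ⟨p, q, hxE, hyE2, hzE, hpq, hparity, hp⟩ :=
        hT.coprime_classification' hgcd2 hxodd hzpos
      have hy2pos : (0 : ℤ) < (y : ℤ) ^ 2 := by
        have : (0 : ℤ) < (y : ℤ) := by exact_mod_cast hy
        positivity
      have hpqpos : 0 < p * q := by linarith [hyE2 ▸ hy2pos]
      have hppos : 0 < p := lt_of_le_of_ne hp (by rintro rfl; simp at hpqpos)
      have hqpos : 0 < q := by
        rcases mul_pos_iff.mp hpqpos with ⟨_, h⟩ | ⟨h, _⟩
        · exact h
        · linarith
      set M := p.natAbs with hMdef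
      set N := q.natAbs with hNdef
      have hPp : (M : ℤ) = p := Int.natAbs_of_nonneg hppos.le
      have hQq : (N : ℤ) = q := Int.natAbs_of_nonneg hqpos.le
      have hMpos : 0 < M := by
        have : (0 : ℤ) < (M : ℤ) := hPp ▸ hppos
        exact_mod_cast this
      have hNpos : 0 < N := by
        have : (0 : ℤ) < (N : ℤ) := hQq ▸ hqpos
        exact_mod_cast this
      have h1n : y ^ 2 = 2 * M * N := by
        have h10 : ((y ^ 2 : ℕ) : ℤ) = ((2 * M * N : ℕ) : ℤ) := by
          push_cast [hPp, hQq]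
          linarith [hyE2]
        exact_mod_cast h10
      have h2n : w ^ 2 = M ^ 2 + N ^ 2 := by
        have h10 : ((w ^ 2 : ℕ) : ℤ) = ((M ^ 2 + N ^ 2 : ℕ) : ℤ) := by
          push_cast [hPp, hQq]
          exact hzE
        exact_mod_cast h10
      have hcoMN : Nat.Coprime M N := by
        have h10 : Nat.gcd M N = 1 := by
          rw [← Int.gcd_natCast_natCast, hPp, hQq]
          exact hpq
        exact h10
      have eM : ((M % 2 : ℕ) : ℤ) = p % 2 := by rw [Int.natCast_mod, hPp]; norm_num
      have eN : ((N % 2 : ℕ) : ℤ) = q % 2 := by rw [Int.natCast_mod, hQq]; norm_num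
      rcases hparity with ⟨hpe, hqo⟩ | ⟨hpo, hqe⟩
      · -- p even, q odd : use subcaseB with (N, M)
        have hMe : M % 2 = 0 := by rw [hpe] at eM; exact_mod_cast eM
        have hNo : N % 2 = 1 := by rw [hqo] at eN; exact_mod_cast eN
        obtain ⟨r, s, a, hrw, hs, ha, hreq⟩ :=
          subcaseB hw hNpos hMpos hNo hcoMN.symm hMe
            (by rw [h1n]; ring) (by rw [h2n]; ring)
        exact (IH r hrw s a hs ha) hreq
      · -- p odd, q even
        have hMo : M % 2 = 1 := by rw [hpo] at eM; exact_mod_cast eM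
        have hNe : N % 2 = 0 := by rw [hqe] at eN; exact_mod_cast eN
        obtain ⟨r, s, a, hrw, hs, ha, hreq⟩ :=
          subcaseB hw hMpos hNpos hMo hcoMN hNe h1n h2n
        exact (IH r hrw s a hs ha) hreq
    · -- y odd: case A
      have hyO : y % 2 = 1 := Nat.odd_iff.mp hyo
      have hT : PythagoreanTriple ((y : ℤ) ^ 2) ((c : ℤ)) ((w : ℤ) ^ 2) := by
        delta PythagoreanTriple
        have h5 : ((w : ℤ)) ^ 4 = (y : ℤ) ^ 4 + (c : ℤ) ^ 2 := by exact_mod_cast heq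
        linear_combination -h5
      have hgcd2 : Int.gcd ((y : ℤ) ^ 2) ((c : ℤ)) = 1 := by
        rw [show ((y : ℤ) ^ 2) = ((y ^ 2 : ℕ) : ℤ) by push_cast; ring,
           Int.gcd_natCast_natCast]
        exact hcy2c
      have hxodd : ((y : ℤ) ^ 2) % 2 = 1 := by
        have h7 := odd_sq_odd hyO
        have h8 : ((y ^ 2 % 2 : ℕ) : ℤ) = ((y ^ 2 : ℕ) : ℤ) % 2 := Int.natCast_mod _ _
        have h9 : ((y ^ 2 : ℕ) : ℤ) = (y : ℤ) ^ 2 := by push_cast; ring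
        omega
      obtain ⟨p, q, hxE, hyE2, hzE, hpq, _, hp⟩ :=
        hT.coprime_classification' hgcd2 hxodd hzpos
      have hcpos : (0 : ℤ) < (c : ℤ) := by exact_mod_cast hc
      have hpqpos : 0 < p * q := by linarith [hyE2 ▸ hcpos]
      have hppos : 0 < p := lt_of_le_of_ne hp (by rintro rfl; simp at hpqpos)
      have hqpos : 0 < q := by
        rcases mul_pos_iff.mp hpqpos with ⟨_, h⟩ | ⟨h, _⟩
        · exact h
        · linarith
      set M := p.natAbs with hMdef
      set N := q.natAbs with hNdef
      have hPp : (M : ℤ) = p := Int.natAbs_of_nonneg hppos.le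
      have hQq : (N : ℤ) = q := Int.natAbs_of_nonneg hqpos.le
      have hNpos : 0 < N := by
        have : (0 : ℤ) < (N : ℤ) := hQq ▸ hqpos
        exact_mod_cast this
      have e1 : (M : ℤ) ^ 2 = (y : ℤ) ^ 2 + (N : ℤ) ^ 2 := by
        rw [hPp, hQq]; linarith [hxE]
      have e2 : (w : ℤ) ^ 2 = (M : ℤ) ^ 2 + (N : ℤ) ^ 2 := by
        rw [hPp, hQq]; exact hzE
      have hMw : M < w := by
        by_contra h
        push_neg at h
        have h10 : (w : ℤ) ≤ (M : ℤ) := by exact_mod_cast h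
        have h11 : (0 : ℤ) < (w : ℤ) := by exact_mod_cast hw
        have h12 : (0 : ℤ) < (N : ℤ) := hQq ▸ hqpos
        nlinarith
      have hfin : M ^ 4 = N ^ 4 + (y * w) ^ 2 := by
        have h10 : ((M ^ 4 : ℕ) : ℤ) = ((N ^ 4 + (y * w) ^ 2 : ℕ) : ℤ) := by
          push_cast
          linear_combination ((M : ℤ) ^ 2 + (N : ℤ) ^ 2) * e1 - (y : ℤ) ^ 2 * e2
        exact_mod_cast h10
      exact (IH M hMw N (y * w) hNpos (mul_pos hy hw)) hfin
  · -- non-coprime case: descend by the gcd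
    obtain ⟨w1, hw1⟩ := Nat.gcd_dvd_left w y
    obtain ⟨y1, hy1⟩ := Nat.gcd_dvd_right w y
    have hdpos : 0 < Nat.gcd w y := Nat.gcd_pos_of_pos_left y hw
    set d := Nat.gcd w y with hddef
    clear_value d
    have hd2 : 2 ≤ d := by omega
    have hw1pos : 0 < w1 := by
      rcases Nat.eq_zero_or_pos w1 with h | h
      · rw [h, Nat.mul_zero] at hw1; omega
      · exact h
    have hy1pos : 0 < y1 := by
      rcases Nat.eq_zero_or_pos y1 with h | h
      · rw [h, Nat.mul_zero] at hy1; omega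
      · exact h
    have hle : y ^ 4 ≤ w ^ 4 := by omega
    have hc2 : c ^ 2 = w ^ 4 - y ^ 4 := by omega
    have hd4c : (d ^ 2) ^ 2 ∣ c ^ 2 := by
      have h1 : d ^ 4 ∣ w ^ 4 := by
        rw [hw1]; exact (pow_dvd_pow_of_dvd (Dvd.intro w1 rfl) 4)
      have h2 : d ^ 4 ∣ y ^ 4 := by
        rw [hy1]; exact (pow_dvd_pow_of_dvd (Dvd.intro y1 rfl) 4)
      rw [show (d ^ 2) ^ 2 = d ^ 4 by ring, hc2]
      exact Nat.dvd_sub h1 h2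
    have hd2c : d ^ 2 ∣ c := (Nat.pow_dvd_pow_iff (by norm_num)).mp hd4c
    obtain ⟨c1, hc1⟩ := hd2c
    have hc1pos : 0 < c1 := by
      rcases Nat.eq_zero_or_pos c1 with h | h
      · rw [h, Nat.mul_zero] at hc1; omega
      · exact h
    have hdz : (d : ℤ) ≠ 0 := by
      have : (0 : ℤ) < (d : ℤ) := by exact_mod_cast hdpos
      omega
    have e : (d : ℤ) ^ 4 * ((w1 : ℤ) ^ 4) = (d : ℤ) ^ 4 * ((y1 : ℤ) ^ 4 + (c1 : ℤ) ^ 2) := by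
      have h := congrArg (Nat.cast : ℕ → ℤ) heq
      push_cast [hw1, hy1, hc1] at h
      linear_combination h
    have e2 : ((w1 : ℤ)) ^ 4 = (y1 : ℤ) ^ 4 + (c1 : ℤ) ^ 2 :=
      mul_left_cancel₀ (pow_ne_zero 4 hdz) e
    have e3 : w1 ^ 4 = y1 ^ 4 + c1 ^ 2 := by exact_mod_cast e2
    have hlt : w1 < w := by
      have h1 : 2 * w1 ≤ d * w1 := Nat.mul_le_mul_right w1 hd2
      omega
    exact (IH w1 hlt y1 c1 hy1pos hc1pos) e3

theorem stmt_1 : ¬ ∃ x y z w : ℕ, 0 < x ∧ 0 < y ∧ 0 < z ∧ 0 < w ∧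
    z^2 = w^2 + y^2 ∧ w^2 = y^2 + x^2 := by
  rintro ⟨x, y, z, w, hx, hy, hz, hw, h1, h2⟩
  have hfin : w ^ 4 = y ^ 4 + (x * z) ^ 2 := by
    have e1 : (z : ℤ) ^ 2 = (w : ℤ) ^ 2 + (y : ℤ) ^ 2 := by exact_mod_cast h1
    have e2 : (w : ℤ) ^ 2 = (y : ℤ) ^ 2 + (x : ℤ) ^ 2 := by exact_mod_cast h2
    have h10 : ((w ^ 4 : ℕ) : ℤ) = ((y ^ 4 + (x * z) ^ 2 : ℕ) : ℤ) := by
      push_cast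
      linear_combination ((w : ℤ) ^ 2 + (y : ℤ) ^ 2) * e2 - (x : ℤ) ^ 2 * e1
    exact_mod_cast h10
  exact no_diff w y (x * z) hy (mul_pos hx hz) hfin
end

section
/- There do not exist positive integers a, b, c, d such that (a, b, c) and (a, d, b) are both Pythagorean triples, i.e., c^2 = a^2 + b^2 and b^2 = a^2 + d^2. -/
set_option maxHeartbeats 1000000

lemma coprime_sq' {u v w : ℕ} (h : Nat.Coprime u v) (he : u * v = w ^ 2) : ∃ s, u = s ^ 2 := by
  apply exists_eq_pow_of_mul_eq_pow (k := 2) _ he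
  rw [Nat.isUnit_iff]; exact h

lemma coprime_pow4' {u v w : ℕ} (h : Nat.Coprime u v) (he : u * v = w ^ 4) : ∃ s, u = s ^ 4 := by
  apply exists_eq_pow_of_mul_eq_pow (k := 4) _ he
  rw [Nat.isUnit_iff]; exact h

lemma step2 {s t b : ℕ} (hb : b % 2 = 1) (ht : 0 < t) (hst : Nat.Coprime s t)
    (h : b ^ 2 = s ^ 4 + 4 * t ^ 4) :
    ∃ a' e' b', 0 < a' ∧ 0 < e' ∧ a' ^ 4 + e' ^ 2 = b' ^ 4 ∧ b' < b := by
  have hs : s % 2 = 1 := by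
    rcases Nat.even_or_odd s with hev | hod
    · obtain ⟨k, hk⟩ := hev
      exfalso
      have h1 : b ^ 2 = 4 * (4 * k ^ 4 + t ^ 4) := by rw [hk] at h; rw [h]; ring
      have h2 : 2 ∣ b := by
        have : 2 ∣ b ^ 2 := ⟨2 * (4 * k ^ 4 + t ^ 4), by omega⟩
        exact Nat.Prime.dvd_of_dvd_pow Nat.prime_two this
      omega
    · exact Nat.odd_iff.mp hod
  have hs1 : 0 < s := by omega
  have hs4 : 0 < s ^ 4 := pow_pos hs1 4
  have ht4 : 0 < t ^ 4 := pow_pos ht 4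
  have h2t : 2 * t ^ 2 < b := by
    have h1 : (2 * t ^ 2) ^ 2 < b ^ 2 := by nlinarith
    exact lt_of_pow_lt_pow_left₀ 2 (Nat.zero_le b) h1
  set D := b - 2 * t ^ 2 with hDdef
  set S := b + 2 * t ^ 2 with hSdef
  have hD : D + 2 * t ^ 2 = b := by omega
  have hS : S = D + 4 * t ^ 2 := by omega
  have hDS : D * S = s ^ 4 := by
    have e1 : b ^ 2 = D ^ 2 + 4 * (D * t ^ 2) + 4 * t ^ 4 := by rw [← hD]; ring
    have e2 : D * S = D ^ 2 + 4 * (D * t ^ 2) := by rw [hS]; ring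
    linarith
  have hcop : Nat.Coprime D S := by
    have hg1 : Nat.gcd D S ∣ 4 * t ^ 2 := by
      have := Nat.dvd_sub (Nat.gcd_dvd_right D S) (Nat.gcd_dvd_left D S)
      rwa [show S - D = 4 * t ^ 2 by omega] at this
    have hg2 : Nat.gcd D S ∣ s ^ 4 := by
      rw [← hDS]; exact Dvd.dvd.mul_right (Nat.gcd_dvd_left D S) S
    have hodd : Nat.gcd D S % 2 = 1 := by
      rcases Nat.even_or_odd (Nat.gcd D S) with hev | hod
      · exfalso
        have h2 : 2 ∣ s ^ 4 := dvd_trans hev.two_dvd hg2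
        have : 2 ∣ s := Nat.Prime.dvd_of_dvd_pow Nat.prime_two h2
        omega
      · exact Nat.odd_iff.mp hod
    have hgt : Nat.gcd D S ∣ t ^ 2 := by
      have hco2 : Nat.Coprime (Nat.gcd D S) 4 := by
        have h2 : Nat.Coprime (Nat.gcd D S) 2 :=
          Nat.coprime_two_right.mpr (Nat.odd_iff.mpr hodd)
        simpa [show (4 : ℕ) = 2 ^ 2 by norm_num] using h2.pow_right 2
      exact hco2.dvd_of_dvd_mul_left hg1
    have hst4 : Nat.Coprime (s ^ 4) (t ^ 2) := Nat.Coprime.pow _ _ hst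
    have : Nat.gcd D S ∣ Nat.gcd (s ^ 4) (t ^ 2) := Nat.dvd_gcd hg2 hgt
    rw [hst4] at this
    exact Nat.eq_one_of_dvd_one this
  obtain ⟨n, hn⟩ := coprime_pow4' hcop hDS
  obtain ⟨m, hm⟩ := coprime_pow4' (Nat.coprime_comm.mp hcop) (by rwa [mul_comm] at hDS)
  refine ⟨n, 2 * t, m, ?_, by omega, ?_, ?_⟩
  · have hDpos : 0 < D := by omega
    rw [hn] at hDpos
    have : n ≠ 0 := by rintro rfl; simp at hDpos
    exact Nat.pos_of_ne_zero this
  · rw [show (2 * t) ^ 2 = 4 * t ^ 2 by ring, ← hn, ← hm]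
    linarith
  · by_contra hmb
    push_neg at hmb
    have h5 : 5 ≤ b ^ 2 := by linarith
    have hb3 : 3 ≤ b := by
      by_contra hc
      push_neg at hc
      interval_cases b <;> norm_num at h5
    have hb4 : b ^ 4 ≤ m ^ 4 := Nat.pow_le_pow_left hmb 4
    have hm4 : m ^ 4 = b + 2 * t ^ 2 := by linarith
    nlinarith [hb4, hm4, h2t, hb3]

lemma descent (a e b : ℕ) (ha : 0 < a) (he : 0 < e) (h : a ^ 4 + e ^ 2 = b ^ 4) :
    ∃ a' e' b', 0 < a' ∧ 0 < e' ∧ a' ^ 4 + e' ^ 2 = b' ^ 4 ∧ b' < b := by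
  have hb : 0 < b := by
    rcases Nat.eq_zero_or_pos b with rfl | h'
    · exfalso; nlinarith [pow_pos ha 4, pow_pos he 2]
    · exact h'
  have hab : a < b := by
    have h4 : a ^ 4 < b ^ 4 := by nlinarith [pow_pos he 2]
    exact lt_of_pow_lt_pow_left₀ 4 (Nat.zero_le b) h4
  by_cases hg : Nat.gcd a b = 1
  · -- ===== coprime case =====
    have hco : Nat.Coprime a b := hg
    have hab2 : a ^ 2 < b ^ 2 := Nat.pow_lt_pow_left hab two_ne_zero
    have hcosq : Nat.Coprime (a ^ 2) (b ^ 2) := Nat.Coprime.pow _ _ hco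
    rcases Nat.even_or_odd a with haev | haod
    · -- a even, so b odd
      have haev' : a % 2 = 0 := Nat.even_iff.mp haev
      have hbodd : b % 2 = 1 := by
        rcases Nat.even_or_odd b with hbev | hbod
        · exfalso
          have h2 : (2 : ℕ) ∣ 1 := hg ▸ Nat.dvd_gcd haev.two_dvd hbev.two_dvd
          norm_num at h2
        · exact Nat.odd_iff.mp hbod
      obtain ⟨a1, ha1⟩ : ∃ a1, a = 2 * a1 := ⟨a / 2, by omega⟩
      set u := b ^ 2 - a ^ 2 with hudef
      set v := b ^ 2 + a ^ 2 with hvdef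
      have hu : u + a ^ 2 = b ^ 2 := by omega
      have hv : v = u + 2 * a ^ 2 := by omega
      have huv : u * v = e ^ 2 := by
        have e1 : b ^ 4 = u ^ 2 + 2 * (a ^ 2 * u) + a ^ 4 := by
          rw [show b ^ 4 = (b ^ 2) ^ 2 by ring, ← hu]; ring
        have e2 : u * v = u ^ 2 + 2 * (a ^ 2 * u) := by rw [hv]; ring
        linarith
      have pa2 : a ^ 2 % 2 = 0 := by
        have : a ^ 2 = 4 * a1 ^ 2 := by rw [ha1]; ring
        omega
      have pb2 : b ^ 2 % 2 = 1 := Nat.odd_iff.mp ((Nat.odd_iff.mpr hbodd).pow)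
      have huodd : u % 2 = 1 := by omega
      have hvodd : v % 2 = 1 := by omega
      have hcop : Nat.Coprime u v := by
        have d1 : Nat.gcd u v ∣ 2 * a ^ 2 := by
          have := Nat.dvd_sub (Nat.gcd_dvd_right u v) (Nat.gcd_dvd_left u v)
          rwa [show v - u = 2 * a ^ 2 by omega] at this
        have d2 : Nat.gcd u v ∣ 2 * b ^ 2 := by
          have := Nat.dvd_add (Nat.gcd_dvd_left u v) (Nat.gcd_dvd_right u v)
          rwa [show u + v = 2 * b ^ 2 by omega] at this
        have godd : Nat.gcd u v % 2 = 1 := by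
          rcases Nat.even_or_odd (Nat.gcd u v) with hev | hod
          · exfalso
            have : 2 ∣ u := dvd_trans hev.two_dvd (Nat.gcd_dvd_left u v)
            omega
          · exact Nat.odd_iff.mp hod
        have gco2 : Nat.Coprime (Nat.gcd u v) 2 :=
          Nat.coprime_two_right.mpr (Nat.odd_iff.mpr godd)
        have d1' : Nat.gcd u v ∣ a ^ 2 := gco2.dvd_of_dvd_mul_left d1
        have d2' : Nat.gcd u v ∣ b ^ 2 := gco2.dvd_of_dvd_mul_left d2
        have : Nat.gcd u v ∣ 1 := hcosq ▸ Nat.dvd_gcd d1' d2'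
        exact Nat.eq_one_of_dvd_one this
      obtain ⟨u2, hu2⟩ := coprime_sq' hcop huv
      obtain ⟨v2, hv2⟩ := coprime_sq' (Nat.coprime_comm.mp hcop) (by rwa [mul_comm] at huv)
      have hu2odd : u2 % 2 = 1 := by
        rcases Nat.even_or_odd u2 with h' | h'
        · exfalso
          have : u2 ^ 2 % 2 = 0 := Nat.even_iff.mp ((Nat.even_pow).mpr ⟨h', two_ne_zero⟩)
          omega
        · exact Nat.odd_iff.mp h'
      have hule : u ≤ v := by omega
      have hle : u2 ≤ v2 := by
        have : u2 ^ 2 ≤ v2 ^ 2 := by rw [← hu2, ← hv2]; exact hule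
        exact le_of_pow_le_pow_left₀ two_ne_zero (Nat.zero_le v2) this
      have du2 : u2 ∣ u := by rw [hu2]; exact dvd_pow_self _ two_ne_zero
      have dv2 : v2 ∣ v := by rw [hv2]; exact dvd_pow_self _ two_ne_zero
      have hcop2 : Nat.Coprime u2 v2 :=
        (hcop.coprime_dvd_left du2).coprime_dvd_right dv2
      have hv2odd : v2 % 2 = 1 := by
        rcases Nat.even_or_odd v2 with h' | h'
        · exfalso
          have : v2 ^ 2 % 2 = 0 := Nat.even_iff.mp ((Nat.even_pow).mpr ⟨h', two_ne_zero⟩)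
          omega
        · exact Nat.odd_iff.mp h'
      obtain ⟨q, hq⟩ : ∃ q, v2 = 2 * q + u2 := ⟨(v2 - u2) / 2, by omega⟩
      have hpq : (q + u2) ^ 2 + q ^ 2 = b ^ 2 := by
        have h2b : u + v = 2 * b ^ 2 := by omega
        rw [hu2, hv2, hq] at h2b
        have expand : u2 ^ 2 + (2 * q + u2) ^ 2 = 2 * ((q + u2) ^ 2 + q ^ 2) := by ring
        linarith [h2b, expand]
      have hqp : q * (q + u2) = 2 * a1 ^ 2 := by
        have h2a : v = u + 2 * a ^ 2 := hv
        rw [hu2, hv2, hq, ha1] at h2a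
        have expand : (2 * q + u2) ^ 2 = u2 ^ 2 + 4 * (q * (q + u2)) := by ring
        have e4 : (2 * a1) ^ 2 = 4 * a1 ^ 2 := by ring
        linarith [h2a, expand, e4]
      have hcoppq : Nat.Coprime q (q + u2) := by
        have d1 : Nat.gcd q (q + u2) ∣ u2 := by
          have := Nat.dvd_sub (Nat.gcd_dvd_right q (q + u2)) (Nat.gcd_dvd_left q (q + u2))
          rwa [show q + u2 - q = u2 by omega] at this
        have d2 : Nat.gcd q (q + u2) ∣ v2 := by
          have := Nat.dvd_add (Nat.gcd_dvd_left q (q + u2)) (Nat.gcd_dvd_right q (q + u2))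
          rwa [show q + (q + u2) = v2 by omega] at this
        have d1' : Nat.gcd q (q + u2) ∣ u2 := d1
        have : Nat.gcd q (q + u2) ∣ 1 := hcop2 ▸ Nat.dvd_gcd d1' d2
        exact Nat.eq_one_of_dvd_one this
      have ha1pos : 0 < a1 := by omega
      have hqpos : 0 < q := by
        rcases Nat.eq_zero_or_pos q with rfl | h'
        · exfalso
          have hp2 : 0 < a1 ^ 2 := pow_pos ha1pos 2
          rw [zero_mul] at hqp
          omega
        · exact h'
      rcases Nat.even_or_odd q with hqev | hqod
      · -- q even : q = 2 q1, p = q + u2 odd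
        have hqev' : q % 2 = 0 := Nat.even_iff.mp hqev
        obtain ⟨q1, hq1⟩ : ∃ q1, q = 2 * q1 := ⟨q / 2, by omega⟩
        have hq1p : (q + u2) * q1 = a1 ^ 2 := by
          have e1 : q * (q + u2) = 2 * ((q + u2) * q1) := by rw [hq1]; ring
          linarith [hqp, e1]
        have hcop3 : Nat.Coprime (q + u2) q1 := by
          have : q1 ∣ q := ⟨2, by omega⟩
          exact ((hcoppq.coprime_dvd_left this).symm)
        obtain ⟨s, hs⟩ := coprime_sq' hcop3 hq1p
        obtain ⟨t, ht⟩ := coprime_sq' hcop3.symm (by rwa [mul_comm] at hq1p)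
        have hst : Nat.Coprime s t := by
          have ds : s ∣ q + u2 := by rw [hs]; exact dvd_pow_self _ two_ne_zero
          have dt : t ∣ q1 := by rw [ht]; exact dvd_pow_self _ two_ne_zero
          exact (hcop3.coprime_dvd_left ds).coprime_dvd_right dt
        have htpos : 0 < t := by
          rcases Nat.eq_zero_or_pos t with rfl | h'
          · exfalso; simp at ht; omega
          · exact h'
        have hkey : b ^ 2 = s ^ 4 + 4 * t ^ 4 := by
          have : b ^ 2 = (q + u2) ^ 2 + q ^ 2 := hpq.symm
          rw [this, hs, hq1, ht]; ring
        exact step2 hbodd htpos hst hkey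
      · -- q odd, so p = q + u2 even
        have hqod' : q % 2 = 1 := Nat.odd_iff.mp hqod
        obtain ⟨p1, hp1⟩ : ∃ p1, q + u2 = 2 * p1 := ⟨(q + u2) / 2, by omega⟩
        have hq1p : q * p1 = a1 ^ 2 := by
          have e1 : q * (q + u2) = 2 * (q * p1) := by rw [hp1]; ring
          linarith [hqp, e1]
        have hcop3 : Nat.Coprime q p1 := by
          have : p1 ∣ q + u2 := ⟨2, by omega⟩
          exact hcoppq.coprime_dvd_right this
        obtain ⟨s, hs⟩ := coprime_sq' hcop3 hq1p
        obtain ⟨t, ht⟩ := coprime_sq' hcop3.symm (by rwa [mul_comm] at hq1p)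
        have hst : Nat.Coprime s t := by
          have ds : s ∣ q := by rw [hs]; exact dvd_pow_self _ two_ne_zero
          have dt : t ∣ p1 := by rw [ht]; exact dvd_pow_self _ two_ne_zero
          exact (hcop3.coprime_dvd_left ds).coprime_dvd_right dt
        have htpos : 0 < t := by
          rcases Nat.eq_zero_or_pos t with rfl | h'
          · exfalso; simp at ht; omega
          · exact h'
        have hkey : b ^ 2 = s ^ 4 + 4 * t ^ 4 := by
          have h' : b ^ 2 = (q + u2) ^ 2 + q ^ 2 := hpq.symm
          rw [hp1] at h'
          rw [h', hs, ht]; ring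
        exact step2 hbodd htpos hst hkey
    · -- a odd
      have haod' : a % 2 = 1 := Nat.odd_iff.mp haod
      rcases Nat.even_or_odd b with hbev | hbod
      · -- a odd, b even : impossible mod 8
        exfalso
        have hbev' : b % 2 = 0 := Nat.even_iff.mp hbev
        have ha8 : a ^ 4 % 8 = 1 := by
          have h48 : a ^ 4 % 8 = (a % 8) ^ 4 % 8 := by rw [Nat.pow_mod]
          have h' : a % 8 = 1 ∨ a % 8 = 3 ∨ a % 8 = 5 ∨ a % 8 = 7 := by omega
          rcases h' with h' | h' | h' | h' <;> rw [h48, h'] <;> norm_num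
        have hb8 : b ^ 4 % 8 = 0 := by
          have h48 : b ^ 4 % 8 = (b % 8) ^ 4 % 8 := by rw [Nat.pow_mod]
          have h' : b % 8 = 0 ∨ b % 8 = 2 ∨ b % 8 = 4 ∨ b % 8 = 6 := by omega
          rcases h' with h' | h' | h' | h' <;> rw [h48, h'] <;> norm_num
        have he8 : e ^ 2 % 8 = 0 ∨ e ^ 2 % 8 = 1 ∨ e ^ 2 % 8 = 4 := by
          have h48 : e ^ 2 % 8 = (e % 8) ^ 2 % 8 := by rw [Nat.pow_mod]
          have h' : e % 8 = 0 ∨ e % 8 = 1 ∨ e % 8 = 2 ∨ e % 8 = 3 ∨ e % 8 = 4 ∨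
              e % 8 = 5 ∨ e % 8 = 6 ∨ e % 8 = 7 := by omega
          rcases h' with h' | h' | h' | h' | h' | h' | h' | h' <;> rw [h48, h'] <;> norm_num
        omega
      · -- a odd, b odd
        have hbod' : b % 2 = 1 := Nat.odd_iff.mp hbod
        have pa4 : a ^ 4 % 2 = 1 := Nat.odd_iff.mp (haod.pow)
        have pb4 : b ^ 4 % 2 = 1 := Nat.odd_iff.mp (hbod.pow)
        have hee : e % 2 = 0 := by
          rcases Nat.even_or_odd e with h' | h'
          · exact Nat.even_iff.mp h'
          · exfalso
            have : e ^ 2 % 2 = 1 := Nat.odd_iff.mp (h'.pow)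
            omega
        obtain ⟨e1, he1⟩ : ∃ e1, e = 2 * e1 := ⟨e / 2, by omega⟩
        have pa2 : a ^ 2 % 2 = 1 := Nat.odd_iff.mp (haod.pow)
        have pb2 : b ^ 2 % 2 = 1 := Nat.odd_iff.mp (hbod.pow)
        obtain ⟨u1, hu1⟩ : ∃ u1, b ^ 2 = 2 * u1 + a ^ 2 := ⟨(b ^ 2 - a ^ 2) / 2, by omega⟩
        have key : u1 * (u1 + a ^ 2) = e1 ^ 2 := by
          have e1' : b ^ 4 = (2 * u1 + a ^ 2) ^ 2 := by
            rw [← hu1]; ring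
          have e2' : (2 * u1 + a ^ 2) ^ 2 = 4 * (u1 * (u1 + a ^ 2)) + a ^ 4 := by ring
          have e3' : e ^ 2 = 4 * e1 ^ 2 := by rw [he1]; ring
          linarith
        have hcop : Nat.Coprime u1 (u1 + a ^ 2) := by
          have d1 : Nat.gcd u1 (u1 + a ^ 2) ∣ a ^ 2 := by
            have := Nat.dvd_sub (Nat.gcd_dvd_right u1 (u1 + a ^ 2))
              (Nat.gcd_dvd_left u1 (u1 + a ^ 2))
            rwa [show u1 + a ^ 2 - u1 = a ^ 2 by omega] at this
          have d2 : Nat.gcd u1 (u1 + a ^ 2) ∣ b ^ 2 := by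
            have := Nat.dvd_add (Nat.gcd_dvd_left u1 (u1 + a ^ 2))
              (Nat.gcd_dvd_right u1 (u1 + a ^ 2))
            rwa [show u1 + (u1 + a ^ 2) = b ^ 2 by omega] at this
          have : Nat.gcd u1 (u1 + a ^ 2) ∣ 1 := hcosq ▸ Nat.dvd_gcd d1 d2
          exact Nat.eq_one_of_dvd_one this
        obtain ⟨t, htt⟩ := coprime_sq' hcop key
        obtain ⟨s, hss⟩ := coprime_sq' (Nat.coprime_comm.mp hcop) (by rwa [mul_comm] at key)
        have hu1pos : 0 < u1 := by omega
        refine ⟨t, a * b, s, ?_, by positivity, ?_, ?_⟩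
        · rcases Nat.eq_zero_or_pos t with rfl | h'
          · exfalso; simp at htt; omega
          · exact h'
        · have q1 : (t ^ 2) ^ 2 + a ^ 2 * b ^ 2 = (s ^ 2) ^ 2 := by
            rw [← htt, ← hss, hu1]; ring
          calc t ^ 4 + (a * b) ^ 2 = (t ^ 2) ^ 2 + a ^ 2 * b ^ 2 := by ring
            _ = (s ^ 2) ^ 2 := q1
            _ = s ^ 4 := by ring
        · have hsb : s ^ 2 < b ^ 2 := by
            rw [← hss]; omega
          exact lt_of_pow_lt_pow_left₀ 2 (Nat.zero_le b) hsb
  · -- ===== non-coprime case =====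
    set g := Nat.gcd a b with hgdef
    have hga : g ∣ a := Nat.gcd_dvd_left a b
    have hgb : g ∣ b := Nat.gcd_dvd_right a b
    obtain ⟨a1, ha1⟩ := hga
    obtain ⟨b1, hb1⟩ := hgb
    have hg0 : 0 < g := Nat.gcd_pos_of_pos_left _ ha
    have hg2 : 2 ≤ g := by omega
    have hdvd : g ^ 4 ∣ e ^ 2 := by
      have h1 : e ^ 2 = b ^ 4 - a ^ 4 := by omega
      rw [h1]
      exact Nat.dvd_sub (pow_dvd_pow_of_dvd (Nat.gcd_dvd_right a b) 4)
        (pow_dvd_pow_of_dvd (Nat.gcd_dvd_left a b) 4)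
    have hdvd2 : g ^ 2 ∣ e :=
      (Nat.pow_dvd_pow_iff two_ne_zero).mp (by rwa [show (g ^ 2) ^ 2 = g ^ 4 by ring])
    obtain ⟨e1, he1⟩ := hdvd2
    have heq : g ^ 4 * (a1 ^ 4 + e1 ^ 2) = g ^ 4 * b1 ^ 4 := by
      calc g ^ 4 * (a1 ^ 4 + e1 ^ 2) = (g * a1) ^ 4 + (g ^ 2 * e1) ^ 2 := by ring
        _ = a ^ 4 + e ^ 2 := by rw [← ha1, ← he1]
        _ = b ^ 4 := h
        _ = g ^ 4 * b1 ^ 4 := by rw [hb1]; ring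
    have heq2 : a1 ^ 4 + e1 ^ 2 = b1 ^ 4 := Nat.eq_of_mul_eq_mul_left (by positivity) heq
    have ha1pos : 0 < a1 := by
      rcases Nat.eq_zero_or_pos a1 with rfl | h'
      · exfalso; omega
      · exact h'
    have he1pos : 0 < e1 := by
      rcases Nat.eq_zero_or_pos e1 with rfl | h'
      · exfalso; omega
      · exact h'
    have hb1pos : 0 < b1 := by
      rcases Nat.eq_zero_or_pos b1 with rfl | h'
      · exfalso; omega
      · exact h'
    refine ⟨a1, e1, b1, ha1pos, he1pos, heq2, ?_⟩
    calc b1 < 2 * b1 := by omega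
      _ ≤ g * b1 := Nat.mul_le_mul_right _ hg2
      _ = b := hb1.symm

lemma no_sol : ∀ b a e : ℕ, 0 < a → 0 < e → a ^ 4 + e ^ 2 ≠ b ^ 4 := by
  intro b
  induction b using Nat.strong_induction_on with
  | _ b ih =>
    intro a e ha he h
    obtain ⟨a', e', b', h1, h2, h3, h4⟩ := descent a e b ha he h
    exact ih b' h4 a' e' h1 h2 h3

theorem stmt_2 : ¬ ∃ a b c d : ℕ, 0 < a ∧ 0 < b ∧ 0 < c ∧ 0 < d ∧
    c^2 = a^2 + b^2 ∧ b^2 = a^2 + d^2 := by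
  rintro ⟨a, b, c, d, ha, hb, hc, hd, h1, h2⟩
  apply no_sol b a (c * d) ha (by positivity)
  have e1 : (c * d) ^ 2 = (a ^ 2 + b ^ 2) * d ^ 2 := by rw [← h1]; ring
  have e2 : (a ^ 2 + b ^ 2) * d ^ 2 = a ^ 2 * d ^ 2 + b ^ 2 * d ^ 2 := by ring
  have e3 : b ^ 4 = b ^ 2 * (a ^ 2 + d ^ 2) := by rw [← h2]; ring
  have e4 : b ^ 2 * (a ^ 2 + d ^ 2) = a ^ 2 * b ^ 2 + b ^ 2 * d ^ 2 := by ring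
  have e5 : a ^ 2 * (a ^ 2 + d ^ 2) = a ^ 2 * b ^ 2 := by rw [h2]
  have e6 : a ^ 2 * (a ^ 2 + d ^ 2) = a ^ 4 + a ^ 2 * d ^ 2 := by ring
  linarith
end

section
/- There do not exist positive integers r, p, q, d such that q^2 = 2*r^2 + p^2 and d^2 = r^2 + p^2. -/
lemma keyStep {x a b : ℤ} (hx : 0 < x) (ha : a ≠ 0) (hodd : b % 2 = 1)
    (hgcd : Int.gcd (b^2) (2*a^2) = 1) (heq : (b^2)^2 + (2*a^2)^2 = x^2) :
    ∃ e f : ℤ, e.natAbs < x.natAbs ∧ f ≠ 0 ∧ e^4 = f^4 + b^2 := by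
  have htriple : PythagoreanTriple (b^2) (2*a^2) x := by
    unfold PythagoreanTriple; nlinarith [heq]
  have hbodd : (b^2) % 2 = 1 := Int.odd_iff.mp ((Int.odd_iff.mpr hodd).pow (n := 2))
  obtain ⟨s, t, h1, h2, h3, h4, _, h6⟩ :=
    htriple.coprime_classification' hgcd hbodd hx
  have hst : s * t = a^2 := by linarith
  have ha2 : 0 < a^2 := by positivity
  have ht0 : t ≠ 0 := by rintro rfl; rw [mul_zero] at hst; nlinarith
  have hs0 : s ≠ 0 := by rintro rfl; rw [zero_mul] at hst; nlinarith
  have hspos : 0 < s := lt_of_le_of_ne h6 (Ne.symm hs0)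
  have htpos : 0 < t := by nlinarith
  have hco : IsCoprime s t := Int.isCoprime_iff_gcd_eq_one.mpr h4
  obtain ⟨e, he⟩ := Int.sq_of_isCoprime hco hst
  have hes : s = e^2 := by
    rcases he with h|h
    · exact h
    · exfalso; nlinarith [sq_nonneg e]
  obtain ⟨f, hf⟩ := Int.sq_of_isCoprime hco.symm (by linarith [hst] : t * s = a^2)
  have hft : t = f^2 := by
    rcases hf with h|h
    · exact h
    · exfalso; nlinarith [sq_nonneg f]
  refine ⟨e, f, ?_, ?_, ?_⟩
  · have h1' : |e| ≤ e^2 := by nlinarith [abs_nonneg e, sq_abs e]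
    have h2' : (e.natAbs : ℤ) < (x.natAbs : ℤ) := by
      rw [Int.natAbs_of_nonneg hx.le, ← Int.abs_eq_natAbs]
      nlinarith [sq_nonneg e, sq_nonneg f]
    exact_mod_cast h2'
  · rintro rfl; simp at hft; omega
  · have : b^2 = e^4 - f^4 := by rw [h1, hes, hft]; ring
    linarith

lemma descent_s3 : ∀ N : ℕ, ∀ x y z : ℤ, x.natAbs = N → 0 < x → y ≠ 0 → z ≠ 0 →
    x^4 = y^4 + z^2 → False := by
  intro N
  induction N using Nat.strong_induction_on with
  | _ N IH =>
  intro x y z hN hx hy hz heq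
  have hx0 : x ≠ 0 := hx.ne'
  rcases Nat.lt_or_ge 1 (Int.gcd x y) with hg1 | hg1
  · -- non-coprime case: divide out
    set g := Int.gcd x y with hgdef
    obtain ⟨x1, hx1⟩ : (g:ℤ) ∣ x := Int.gcd_dvd_left _ _
    obtain ⟨y1, hy1⟩ : (g:ℤ) ∣ y := Int.gcd_dvd_right _ _
    have hzdvd : ((g:ℤ)^2)^2 ∣ z^2 :=
      ⟨x1^4 - y1^4, by rw [show z^2 = x^4 - y^4 by linarith, hx1, hy1]; ring⟩
    obtain ⟨z1, hz1⟩ : ((g:ℤ)^2) ∣ z := (Int.pow_dvd_pow_iff two_ne_zero).mp hzdvd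
    have hgpos : (0:ℤ) < (g:ℤ) := by exact_mod_cast Nat.lt_of_lt_of_le Nat.zero_lt_one hg1.le
    have heq1 : x1^4 = y1^4 + z1^2 := by
      have h4 : (g:ℤ)^4 * x1^4 = (g:ℤ)^4 * (y1^4 + z1^2) := by
        rw [hx1, hy1, hz1] at heq; ring_nf at heq ⊢; linarith
      exact mul_left_cancel₀ (by positivity) h4
    have hx1ne : x1 ≠ 0 := by rintro rfl; rw [mul_zero] at hx1; exact hx0 hx1
    have hy1ne : y1 ≠ 0 := by rintro rfl; rw [mul_zero] at hy1; exact hy hy1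
    have hz1ne : z1 ≠ 0 := by rintro rfl; rw [mul_zero] at hz1; exact hz hz1
    have hlt : x1.natAbs < N := by
      have hNe : N = g * x1.natAbs := by rw [← hN, hx1, Int.natAbs_mul, Int.natAbs_natCast]
      have h1 : 1 ≤ x1.natAbs := Nat.one_le_iff_ne_zero.mpr (Int.natAbs_ne_zero.mpr hx1ne)
      have h2 : 2 * x1.natAbs ≤ g * x1.natAbs := Nat.mul_le_mul_right _ hg1
      omega
    exact IH x1.natAbs hlt |x1| y1 z1 (Int.natAbs_abs x1) (abs_pos.mpr hx1ne) hy1ne hz1ne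
      (by rw [pow_abs, abs_of_nonneg (by positivity : (0:ℤ) ≤ x1^4)]; exact heq1)
  · -- coprime case
    have hgne : Int.gcd x y ≠ 0 := fun h => hx0 (Int.gcd_eq_zero_iff.mp h).1
    have hg : Int.gcd x y = 1 := by omega
    have hxy : IsCoprime x y := Int.isCoprime_iff_gcd_eq_one.mpr hg
    have hy2z : Int.gcd (y^2) z = 1 := by
      set k := Int.gcd (y^2) z with hk
      have hky : (k:ℤ) ∣ y^2 := Int.gcd_dvd_left _ _
      have hkz : (k:ℤ) ∣ z := Int.gcd_dvd_right _ _
      have hk2 : ((k:ℤ))^2 ∣ (x^2)^2 := by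
        have h1 : ((k:ℤ))^2 ∣ (y^2)^2 := pow_dvd_pow_of_dvd hky 2
        have h2 : ((k:ℤ))^2 ∣ z^2 := pow_dvd_pow_of_dvd hkz 2
        have hxe : (x^2)^2 = (y^2)^2 + z^2 := by ring_nf; ring_nf at heq; linarith
        rw [hxe]; exact dvd_add h1 h2
      have hkx : (k:ℤ) ∣ x^2 := (Int.pow_dvd_pow_iff two_ne_zero).mp hk2
      have hunit : IsUnit (k:ℤ) := (hxy.pow (m := 2) (n := 2)).isUnit_of_dvd' hkx hky
      rcases Int.isUnit_iff.mp hunit with h | h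
      · exact_mod_cast h
      · exfalso; omega
    rcases Int.even_or_odd y with hye | hyo
    · -- y even, x odd, z odd
      have hxodd : Odd x := by
        rcases Int.even_or_odd x with hxe | hxo
        · exfalso
          obtain ⟨c, hc⟩ := hxe; obtain ⟨d, hd⟩ := hye
          have h2x : (2:ℤ) ∣ x := ⟨c, by omega⟩
          have h2y : (2:ℤ) ∣ y := ⟨d, by omega⟩
          have := Int.isUnit_iff.mp (hxy.isUnit_of_dvd' h2x h2y)
          omega
        · exact hxo
      have hzodd : Odd z := by
        have h1 : Odd (z^2) := by
          have hze : z^2 = x^4 - y^4 := by linarith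
          have hy4 : Even (y^4) := by
            rw [show y^4 = y * y^3 by ring]; exact hye.mul_right _
          rw [hze]; exact (hxodd.pow).sub_even hy4
        rcases (Int.odd_pow.mp h1) with h | h
        · exact h
        · norm_num at h
      have htriple : PythagoreanTriple z (y^2) (x^2) := by
        unfold PythagoreanTriple; linear_combination -heq
      have hgcd' : Int.gcd z (y^2) = 1 := by rwa [Int.gcd_comm]
      obtain ⟨m, n, h1, h2, h3, h4, h5, h6⟩ :=
        htriple.coprime_classification' hgcd' (Int.odd_iff.mp hzodd) (by positivity)
      have hy2pos : 0 < y^2 := by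
        exact lt_of_le_of_ne (sq_nonneg y) (Ne.symm (pow_ne_zero 2 hy))
      have hm0 : m ≠ 0 := by
        rintro rfl
        have h0 : y^2 = 0 := by rw [h2]; ring
        exact hy (pow_eq_zero_iff two_ne_zero |>.mp h0)
      have hmpos : 0 < m := lt_of_le_of_ne h6 (Ne.symm hm0)
      have hnpos : 0 < n := by
        by_contra hcon
        push_neg at hcon
        have h0 : m * n ≤ 0 := mul_nonpos_iff.mpr (Or.inl ⟨hmpos.le, hcon⟩)
        have h2' : 2*(m*n) = y^2 := by linear_combination -h2
        linarith only [h2', hy2pos, h0]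
      have hco : IsCoprime m n := Int.isCoprime_iff_gcd_eq_one.mpr h4
      obtain ⟨w, hw⟩ := hye
      have hwne : w ≠ 0 := by rintro rfl; simp at hw; exact hy hw
      have hmn : m * n = 2 * w^2 := by
        have hy4 : y^2 = 4*w^2 := by rw [hw]; ring
        have h2' : 2*(m*n) = y^2 := by linear_combination -h2
        linarith only [h2', hy4]
      rcases h5 with ⟨hm2, hn2⟩ | ⟨hm2, hn2⟩
      · -- m even
        obtain ⟨u, hu⟩ : (2:ℤ) ∣ m := Int.dvd_of_emod_eq_zero hm2
        have hun : u * n = w^2 := by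
          have h2' : 2*(u*n) = 2*(w^2) := by linear_combination hmn - n * hu
          linarith only [h2']
        have hcoun : IsCoprime u n := IsCoprime.of_isCoprime_of_dvd_left hco ⟨2, by rw [hu]; ring⟩
        obtain ⟨a, ha⟩ := Int.sq_of_isCoprime hcoun hun
        have hupos : 0 < u := by rw [hu] at hmpos; linarith only [hmpos]
        have hua : u = a^2 := by
          rcases ha with h|h; · exact h
          · exfalso; rw [h] at hupos; linarith only [hupos, sq_nonneg a]
        have hane : a ≠ 0 := by rintro rfl; rw [hua] at hupos; norm_num at hupos
        obtain ⟨b, hb⟩ := Int.sq_of_isCoprime hcoun.symm (by linarith [hun] : n * u = w^2)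
        have hnb : n = b^2 := by
          rcases hb with h|h; · exact h
          · exfalso; rw [h] at hnpos; linarith only [hnpos, sq_nonneg b]
        have hbne : b ≠ 0 := by rintro rfl; rw [hnb] at hnpos; norm_num at hnpos
        have hbodd : b % 2 = 1 := by
          have hob : Odd (b^2) := by rw [← hnb]; exact Int.odd_iff.mpr hn2
          rcases Int.odd_pow.mp hob with h|h
          · exact Int.odd_iff.mp h
          · norm_num at h
        have hkey : (b^2)^2 + (2*a^2)^2 = x^2 := by
          rw [hu, hua, hnb] at h3; rw [h3]; ring
        have hgcdba : Int.gcd (b^2) (2*a^2) = 1 := by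
          rw [← hnb, show (2:ℤ)*a^2 = m by rw [hu, hua], Int.gcd_comm]; exact h4
        obtain ⟨e, f, hlt, hf0, heqef⟩ := keyStep hx hane hbodd hgcdba hkey
        have hb2 : 0 < b^2 := lt_of_le_of_ne (sq_nonneg b) (Ne.symm (pow_ne_zero 2 hbne))
        have hene : e ≠ 0 := by
          rintro rfl
          have hf4 : 0 ≤ f^4 := by positivity
          have h00 : (0:ℤ)^4 = 0 := by norm_num
          linarith only [heqef, hb2, hf4, h00]
        exact IH e.natAbs (by omega) |e| f b (Int.natAbs_abs e) (abs_pos.mpr hene) hf0 hbne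
          (by rw [pow_abs, abs_of_nonneg (by positivity : (0:ℤ) ≤ e^4)]; exact heqef)
      · -- n even
        obtain ⟨u, hu⟩ : (2:ℤ) ∣ n := Int.dvd_of_emod_eq_zero hn2
        have hun : m * u = w^2 := by
          have h2' : 2*(m*u) = 2*(w^2) := by linear_combination hmn - m * hu
          linarith only [h2']
        have hcomu : IsCoprime m u := IsCoprime.of_isCoprime_of_dvd_right hco ⟨2, by rw [hu]; ring⟩
        obtain ⟨a, ha⟩ := Int.sq_of_isCoprime hcomu hun
        have hma : m = a^2 := by
          rcases ha with h|h; · exact h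
          · exfalso; rw [h] at hmpos; linarith only [hmpos, sq_nonneg a]
        have hane : a ≠ 0 := by rintro rfl; rw [hma] at hmpos; norm_num at hmpos
        have hupos : 0 < u := by rw [hu] at hnpos; linarith only [hnpos]
        obtain ⟨b, hb⟩ := Int.sq_of_isCoprime hcomu.symm (by linarith [hun] : u * m = w^2)
        have hub : u = b^2 := by
          rcases hb with h|h; · exact h
          · exfalso; rw [h] at hupos; linarith only [hupos, sq_nonneg b]
        have hbne : b ≠ 0 := by rintro rfl; rw [hub] at hupos; norm_num at hupos
        have haodd : a % 2 = 1 := by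
          have hoa : Odd (a^2) := by rw [← hma]; exact Int.odd_iff.mpr hm2
          rcases Int.odd_pow.mp hoa with h|h
          · exact Int.odd_iff.mp h
          · norm_num at h
        have hkey : (a^2)^2 + (2*b^2)^2 = x^2 := by
          rw [hu, hub, hma] at h3; rw [h3]
        have hgcdab : Int.gcd (a^2) (2*b^2) = 1 := by
          rw [← hma, show (2:ℤ)*b^2 = n by rw [hu, hub]]; exact h4
        obtain ⟨e, f, hlt, hf0, heqef⟩ := keyStep hx hbne haodd hgcdab hkey
        have ha2 : 0 < a^2 := lt_of_le_of_ne (sq_nonneg a) (Ne.symm (pow_ne_zero 2 hane))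
        have hene : e ≠ 0 := by
          rintro rfl
          have hf4 : 0 ≤ f^4 := by positivity
          have h00 : (0:ℤ)^4 = 0 := by norm_num
          linarith only [heqef, ha2, hf4, h00]
        exact IH e.natAbs (by omega) |e| f a (Int.natAbs_abs e) (abs_pos.mpr hene) hf0 hane
          (by rw [pow_abs, abs_of_nonneg (by positivity : (0:ℤ) ≤ e^4)]; exact heqef)
    · -- y odd
      have htriple : PythagoreanTriple (y^2) z (x^2) := by
        unfold PythagoreanTriple; linear_combination -heq
      obtain ⟨m, n, h1, h2, h3, h4, h5, h6⟩ :=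
        htriple.coprime_classification' hy2z (Int.odd_iff.mp hyo.pow) (by positivity)
      have hn0 : n ≠ 0 := by rintro rfl; rw [mul_zero] at h2; exact hz h2
      have hy2pos : 0 < y^2 := lt_of_le_of_ne (sq_nonneg y) (Ne.symm (pow_ne_zero 2 hy))
      have hn2pos : 0 < n^2 := lt_of_le_of_ne (sq_nonneg n) (Ne.symm (pow_ne_zero 2 hn0))
      have hm0 : m ≠ 0 := by
        rintro rfl
        have hneg : y^2 = -n^2 := by rw [h1]; ring
        linarith only [hneg, hy2pos, hn2pos]
      have hmeq : m^4 = n^4 + (x*y)^2 := by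
        linear_combination (-(x^2))*h1 + (-(m^2-n^2))*h3
      have hlt : m.natAbs < N := by
        have hmx : m^2 < x^2 := by linarith only [h3, hn2pos]
        have hmx' : m.natAbs^2 < x.natAbs^2 := by
          have c1 : ((m.natAbs:ℤ))^2 = m^2 := by rw [← Int.abs_eq_natAbs, sq_abs]
          have c2 : ((x.natAbs:ℤ))^2 = x^2 := by rw [← Int.abs_eq_natAbs, sq_abs]
          have : ((m.natAbs:ℤ))^2 < ((x.natAbs:ℤ))^2 := by rw [c1, c2]; exact hmx
          exact_mod_cast this
        have hfin : m.natAbs < x.natAbs := by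
          by_contra hc
          push_neg at hc
          exact absurd hmx' (not_lt.mpr (Nat.pow_le_pow_left hc 2))
        omega
      exact IH m.natAbs hlt |m| n (x*y) (Int.natAbs_abs m) (abs_pos.mpr hm0) hn0
        (mul_ne_zero hx0 hy)
        (by rw [pow_abs, abs_of_nonneg (by positivity : (0:ℤ) ≤ m^4)]; exact hmeq)

theorem stmt_3 : ¬ ∃ r p q d : ℕ, 0 < r ∧ 0 < p ∧ 0 < q ∧ 0 < d ∧
    q^2 = 2*r^2 + p^2 ∧ d^2 = r^2 + p^2 := by
  rintro ⟨r, p, q, d, hr, hp, hq, hd, h1, h2⟩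
  have key : ((d:ℤ))^4 = ((r:ℤ))^4 + ((p:ℤ)*(q:ℤ))^2 := by
    have h1' : ((q:ℤ))^2 = 2*((r:ℤ))^2 + ((p:ℤ))^2 := by exact_mod_cast h1
    have h2' : ((d:ℤ))^2 = ((r:ℤ))^2 + ((p:ℤ))^2 := by exact_mod_cast h2
    nlinarith [h1', h2']
  exact descent_s3 (d:ℤ).natAbs (d:ℤ) (r:ℤ) ((p:ℤ)*(q:ℤ)) rfl (by exact_mod_cast hd)
    (by exact_mod_cast hr.ne') (by positivity) key
end

section
/- If positive integers x, y, z satisfy x^2 + 2*y^2 = z^2, then there exist positive integers δ, k, λ with gcd(k, λ) = 1 such that x = δ*|k^2 - 2*λ^2|, y = δ*2*k*λ, and z = δ*(k^2 + 2*λ^2). -/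
set_option maxHeartbeats 1000000

/-- A coprime pair of positive integers whose product is a square consists of two squares. -/
lemma aux_sq_sq (a b c : ℤ) (ha : 0 < a) (hb : 0 < b) (hco : IsCoprime a b)
    (h : a * b = c ^ 2) : ∃ k l : ℤ, 0 < k ∧ 0 < l ∧ a = k ^ 2 ∧ b = l ^ 2 := by
  obtain ⟨k0, hk⟩ := Int.sq_of_isCoprime hco h
  obtain ⟨l0, hl⟩ := Int.sq_of_isCoprime hco.symm (by rw [mul_comm]; exact h)
  have hk' : a = k0 ^ 2 := by
    rcases hk with hk | hk
    · exact hk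
    · exfalso; nlinarith [sq_nonneg k0]
  have hl' : b = l0 ^ 2 := by
    rcases hl with hl | hl
    · exact hl
    · exfalso; nlinarith [sq_nonneg l0]
  have hk0 : k0 ≠ 0 := by rintro rfl; simp at hk'; omega
  have hl0 : l0 ≠ 0 := by rintro rfl; simp at hl'; omega
  exact ⟨|k0|, |l0|, abs_pos.mpr hk0, abs_pos.mpr hl0, by rw [sq_abs]; exact hk',
    by rw [sq_abs]; exact hl'⟩

theorem stmt_5 (x y z : ℤ) (hx : 0 < x) (hy : 0 < y) (hz : 0 < z)
    (h : x^2 + 2*y^2 = z^2) :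
    ∃ δ k l : ℤ, 0 < δ ∧ 0 < k ∧ 0 < l ∧ Int.gcd k l = 1 ∧
      x = δ * |k^2 - 2*l^2| ∧ y = δ * (2*k*l) ∧ z = δ * (k^2 + 2*l^2) := by
  set g : ℤ := (Int.gcd x y : ℤ) with hgdef
  have hgnat : 0 < Int.gcd x y := Int.gcd_pos_of_ne_zero_left y hx.ne'
  have hgpos : 0 < g := by rw [hgdef]; exact_mod_cast hgnat
  have hgne : g ≠ 0 := hgpos.ne'
  have hgx : g ∣ x := Int.gcd_dvd_left x y
  have hgy : g ∣ y := Int.gcd_dvd_right x y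
  obtain ⟨x', hx'⟩ := hgx
  obtain ⟨y', hy'⟩ := hgy
  -- g divides z
  have hgz : g ∣ z := by
    have h2 : g ^ 2 ∣ z ^ 2 := by
      have : z ^ 2 = g ^ 2 * (x' ^ 2 + 2 * y' ^ 2) := by rw [← h, hx', hy']; try ring
      exact ⟨_, this⟩
    exact (Int.pow_dvd_pow_iff two_ne_zero).mp h2
  obtain ⟨z', hz'⟩ := hgz
  have hx'pos : 0 < x' := by
    rcases lt_trichotomy x' 0 with h1 | h1 | h1
    · nlinarith
    · simp [h1] at hx'; omega
    · exact h1
  have hy'pos : 0 < y' := by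
    rcases lt_trichotomy y' 0 with h1 | h1 | h1
    · nlinarith
    · simp [h1] at hy'; omega
    · exact h1
  have hz'pos : 0 < z' := by
    rcases lt_trichotomy z' 0 with h1 | h1 | h1
    · nlinarith
    · simp [h1] at hz'; omega
    · exact h1
  -- the reduced equation
  have h' : x' ^ 2 + 2 * y' ^ 2 = z' ^ 2 := by
    have hg2 : g ^ 2 ≠ 0 := pow_ne_zero 2 hgne
    have : g ^ 2 * (x' ^ 2 + 2 * y' ^ 2) = g ^ 2 * z' ^ 2 := by
      rw [hx', hy', hz'] at h; linarith [h]
    exact mul_left_cancel₀ hg2 this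
  -- coprimality of x' y'
  have hco : IsCoprime x' y' := by
    rw [Int.isCoprime_iff_gcd_eq_one]
    have e1 : x' = x / g := by rw [hx']; exact (Int.mul_ediv_cancel_left _ hgne).symm
    have e2 : y' = y / g := by rw [hy']; exact (Int.mul_ediv_cancel_left _ hgne).symm
    rw [e1, e2, hgdef]
    exact Int.gcd_div_gcd_div_gcd hgnat
  -- x' is odd
  have hx'odd : ¬ (2 ∣ x') := by
    intro h2
    have hz2 : (2:ℤ) ∣ z' := by
      have : (2:ℤ) ∣ z' ^ 2 := by
        have : (2:ℤ) ∣ x' ^ 2 := Dvd.dvd.pow h2 two_ne_zero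
        omega
      exact Int.prime_two.dvd_of_dvd_pow this
    obtain ⟨u, hu⟩ := h2
    obtain ⟨v, hv⟩ := hz2
    have : (2:ℤ) ∣ y' := by
      have h2y : (2:ℤ) ∣ y' ^ 2 := by
        have : y' ^ 2 = 2 * (v ^ 2 - u ^ 2) := by subst hu hv; linarith [h']
        exact ⟨_, this⟩
      exact Int.prime_two.dvd_of_dvd_pow h2y
    have : IsUnit (2:ℤ) := hco.isUnit_of_dvd' ⟨u, hu⟩ this
    rw [Int.isUnit_iff] at this
    omega
  -- z' is odd
  have hz'odd : ¬ (2 ∣ z') := by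
    intro h2
    apply hx'odd
    have : (2:ℤ) ∣ x' ^ 2 := by
      have : (2:ℤ) ∣ z' ^ 2 := Dvd.dvd.pow h2 two_ne_zero
      omega
    exact Int.prime_two.dvd_of_dvd_pow this
  -- x' and z' are coprime
  have hcoxz : Int.gcd x' z' = 1 := by
    set e : ℤ := (Int.gcd x' z' : ℤ) with hedef
    have hex : e ∣ x' := Int.gcd_dvd_left x' z'
    have hez : e ∣ z' := Int.gcd_dvd_right x' z'
    have heodd : ¬ (2 ∣ e) := fun hd => hx'odd (hd.trans hex)
    have hey : e ∣ y' := by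
      have h2 : e ^ 2 ∣ 2 * y' ^ 2 := by
        have : 2 * y' ^ 2 = z' ^ 2 - x' ^ 2 := by linarith [h']
        rw [this]
        exact dvd_sub (pow_dvd_pow_of_dvd hez 2) (pow_dvd_pow_of_dvd hex 2)
      have hco2 : IsCoprime (e ^ 2) (2:ℤ) :=
        IsCoprime.pow_left ((Int.prime_two.coprime_iff_not_dvd.mpr heodd).symm)
      have : e ^ 2 ∣ y' ^ 2 := (IsCoprime.dvd_of_dvd_mul_left hco2 h2)
      exact (Int.pow_dvd_pow_iff two_ne_zero).mp this
    have hd1 : e ∣ 1 := by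
      have hg1 := Int.isCoprime_iff_gcd_eq_one.mp hco
      have hd : e ∣ (Int.gcd x' y' : ℤ) := Int.dvd_coe_gcd hex hey
      rw [hg1] at hd; exact_mod_cast hd
    have : e = 1 := Int.eq_one_of_dvd_one (by rw [hedef]; exact Int.natCast_nonneg _) hd1
    rw [hedef] at this; exact_mod_cast this
  -- set up a and b
  have hab2 : (2:ℤ) ∣ z' - x' := by omega
  have hab2' : (2:ℤ) ∣ z' + x' := by omega
  obtain ⟨a, ha⟩ := hab2
  obtain ⟨b, hb⟩ := hab2'
  have hapos : 0 < a := by nlinarith [h']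
  have hbpos : 0 < b := by omega
  -- y' is even
  have hy'even : (2:ℤ) ∣ y' := by
    apply Int.prime_two.dvd_of_dvd_pow
    have : y' ^ 2 = 2 * (a * b) := by nlinarith [h']
    exact ⟨_, this⟩
  obtain ⟨c, hc⟩ := hy'even
  have hcpos : 0 < c := by omega
  have hab : a * b = 2 * c ^ 2 := by nlinarith [h']
  -- a and b are coprime
  have hcoab : IsCoprime a b := by
    rw [Int.isCoprime_iff_gcd_eq_one]
    set d : ℤ := (Int.gcd a b : ℤ) with hddef
    have hda : d ∣ a := Int.gcd_dvd_left a b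
    have hdb : d ∣ b := Int.gcd_dvd_right a b
    have hdx : d ∣ x' := by
      have : x' = b - a := by omega
      rw [this]; exact dvd_sub hdb hda
    have hdz : d ∣ z' := by
      have : z' = a + b := by omega
      rw [this]; exact dvd_add hda hdb
    have hd1 : d ∣ 1 := by
      have hd : d ∣ (Int.gcd x' z' : ℤ) := by exact_mod_cast Int.dvd_coe_gcd hdx hdz
      rw [hcoxz] at hd; exact_mod_cast hd
    have : d = 1 := Int.eq_one_of_dvd_one (by rw [hddef]; exact Int.natCast_nonneg _) hd1
    rw [hddef] at this; exact_mod_cast this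
  -- one of a, b is even
  have h2ab : (2:ℤ) ∣ a ∨ (2:ℤ) ∣ b := by
    have : (2:ℤ) ∣ a * b := by rw [hab]; exact ⟨c ^ 2, rfl⟩
    exact Int.prime_two.dvd_mul.mp this
  rcases h2ab with h2a | h2b
  · -- a = 2 a₁, x' = k² - 2l²
    obtain ⟨a₁, ha₁⟩ := h2a
    have ha₁pos : 0 < a₁ := by omega
    have hab' : a₁ * b = c ^ 2 := by
      have h2 : 2 * (a₁ * b) = 2 * c ^ 2 := by rw [← hab, ha₁]; try ring
      linarith
    have hdvd1 : a₁ ∣ a := ⟨2, by rw [ha₁]; ring⟩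
    have hcoab' : IsCoprime a₁ b := hcoab.of_isCoprime_of_dvd_left hdvd1
    obtain ⟨l, k, hlpos, hkpos, hal, hbk⟩ := aux_sq_sq a₁ b c ha₁pos hbpos hcoab' hab'
    have hckl : c = k * l := by
      have h0 : (c - k * l) * (c + k * l) = 0 := by
        have : c ^ 2 = (l * k) ^ 2 := by rw [← hab', hal, hbk]; try ring
        nlinarith
      rcases mul_eq_zero.mp h0 with h1 | h1
      · linarith
      · nlinarith
    have hklco : Int.gcd k l = 1 := by
      rw [← Int.isCoprime_iff_gcd_eq_one]
      have : IsCoprime (l ^ 2) (k ^ 2) := by rwa [← hal, ← hbk]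
      exact ((this.of_isCoprime_of_dvd_left (dvd_pow_self l two_ne_zero)).of_isCoprime_of_dvd_right
        (dvd_pow_self k two_ne_zero)).symm
    refine ⟨g, k, l, hgpos, hkpos, hlpos, hklco, ?_, ?_, ?_⟩
    · have hx'eq : x' = k ^ 2 - 2 * l ^ 2 := by
        have : x' = b - a := by omega
        rw [this, hbk, ha₁, hal]; try ring
      rw [hx', hx'eq, abs_of_pos (by omega)]
    · rw [hy', hc, hckl]; try ring
    · have hz'eq : z' = k ^ 2 + 2 * l ^ 2 := by
        have : z' = a + b := by omega
        rw [this, hbk, ha₁, hal]; try ring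
      rw [hz', hz'eq]
  · -- b = 2 b₁, x' = 2l² - k²
    obtain ⟨b₁, hb₁⟩ := h2b
    have hb₁pos : 0 < b₁ := by omega
    have hab' : a * b₁ = c ^ 2 := by
      have h2 : 2 * (a * b₁) = 2 * c ^ 2 := by rw [← hab, hb₁]; try ring
      linarith
    have hdvd1 : b₁ ∣ b := ⟨2, by rw [hb₁]; ring⟩
    have hcoab' : IsCoprime a b₁ := hcoab.of_isCoprime_of_dvd_right hdvd1
    obtain ⟨k, l, hkpos, hlpos, hak, hbl⟩ := aux_sq_sq a b₁ c hapos hb₁pos hcoab' hab'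
    have hckl : c = k * l := by
      have h0 : (c - k * l) * (c + k * l) = 0 := by
        have : c ^ 2 = (k * l) ^ 2 := by rw [← hab', hak, hbl]; try ring
        nlinarith
      rcases mul_eq_zero.mp h0 with h1 | h1
      · linarith
      · nlinarith
    have hklco : Int.gcd k l = 1 := by
      rw [← Int.isCoprime_iff_gcd_eq_one]
      have : IsCoprime (k ^ 2) (l ^ 2) := by rwa [← hak, ← hbl]
      exact (this.of_isCoprime_of_dvd_left (dvd_pow_self k two_ne_zero)).of_isCoprime_of_dvd_right
        (dvd_pow_self l two_ne_zero)
    refine ⟨g, k, l, hgpos, hkpos, hlpos, hklco, ?_, ?_, ?_⟩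
    · have hx'eq : x' = 2 * l ^ 2 - k ^ 2 := by
        have : x' = b - a := by omega
        rw [this, hb₁, hbl, hak]; try ring
      rw [hx', abs_of_nonpos (by omega)]
      rw [hx'eq]; try ring
    · rw [hy', hc, hckl]; try ring
    · have hz'eq : z' = k ^ 2 + 2 * l ^ 2 := by
        have : z' = a + b := by omega
        rw [this, hb₁, hbl, hak]; try ring
      rw [hz', hz'eq]
end

section
/- There do not exist positive integers z, x, y with x even, y odd, and z^2 = x^4 + 4*y^4. -/
private lemma abs_pow_four (c : ℤ) : |c| ^ 4 = c ^ 4 := by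
  rw [show (4:ℕ) = 2*2 from rfl, pow_mul, sq_abs, ← pow_mul]

set_option maxHeartbeats 1600000 in
private lemma no_sol_s11 : ∀ z x y : ℕ, 0 < x → 0 < y → z ^ 2 ≠ x ^ 4 + 4 * y ^ 4 := by
  intro z
  induction z using Nat.strong_induction_on with
  | _ z IH =>
  intro x y hx hy h
  have hx4 : 0 < x ^ 4 := by positivity
  have hy4 : 0 < y ^ 4 := by positivity
  have hz : 0 < z := by
    rcases Nat.eq_zero_or_pos z with rfl | hz
    · simp at h; omega
    · exact hz
  by_cases hg : Nat.gcd x y = 1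
  · -- coprime case
    rcases Nat.even_or_odd x with hxe | hxo
    · -- x even : descend
      obtain ⟨a, rfl⟩ := hxe
      have ha : 0 < a := by omega
      have hze : Even z := by
        have h2 : Even (z ^ 2) := ⟨8 * a ^ 4 + 2 * y ^ 4, by rw [h]; ring⟩
        exact (Nat.even_pow.mp h2).1
      obtain ⟨w, rfl⟩ := hze
      have hw : 0 < w := by omega
      have h4 : 4 * w ^ 2 = 4 * (y ^ 4 + 4 * a ^ 4) := by
        have hc := congrArg (Nat.cast (R := ℤ)) h
        push_cast at hc
        exact_mod_cast (by linear_combination hc :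
          (4:ℤ) * (w:ℤ) ^ 2 = 4 * ((y:ℤ) ^ 4 + 4 * (a:ℤ) ^ 4))
      have hweq : w ^ 2 = y ^ 4 + 4 * a ^ 4 := by omega
      exact IH w (by omega) y a hy ha hweq
    · -- x odd : Pythagorean descent
      have hcast : ((z:ℤ)) ^ 2 = (x:ℤ) ^ 4 + 4 * (y:ℤ) ^ 4 := by exact_mod_cast h
      have ht : PythagoreanTriple ((x:ℤ) ^ 2) (2 * (y:ℤ) ^ 2) (z:ℤ) := by
        show (x:ℤ) ^ 2 * ((x:ℤ) ^ 2) + 2 * (y:ℤ) ^ 2 * (2 * (y:ℤ) ^ 2) = (z:ℤ) * (z:ℤ)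
        linear_combination -hcast
      have hXodd : Odd ((x:ℤ)) := by exact_mod_cast hxo
      have hco : Int.gcd ((x:ℤ) ^ 2) (2 * (y:ℤ) ^ 2) = 1 := by
        have h1 : Nat.Coprime (x ^ 2) (2 * y ^ 2) := by
          apply Nat.Coprime.mul_right
          · have hodd2 : x ^ 2 % 2 = 1 := Nat.odd_iff.mp (hxo.pow (n := 2))
            exact (Nat.prime_two.coprime_iff_not_dvd.mpr (by omega)).symm
          · exact Nat.Coprime.pow 2 2 hg
        have h2 : Int.gcd (((x ^ 2 : ℕ)):ℤ) (((2 * y ^ 2 : ℕ)):ℤ) = 1 := by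
          rw [Int.gcd_natCast_natCast]; exact h1
        push_cast at h2
        exact h2
      have hparity : (x:ℤ) ^ 2 % 2 = 1 := Int.odd_iff.mp hXodd.pow
      have hZpos : (0:ℤ) < (z:ℤ) := by exact_mod_cast hz
      obtain ⟨m, n, h1, h2, h3, h4, h5, h6⟩ :=
        ht.coprime_classification' hco hparity hZpos
      -- rule out m even, n odd
      rcases h5 with ⟨hm2, hn2⟩ | ⟨hm2, hn2⟩
      · exfalso
        obtain ⟨X', hX'⟩ := hXodd
        obtain ⟨m', hm'⟩ : ∃ m', m = 2 * m' := ⟨m / 2, by omega⟩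
        obtain ⟨n', hn'⟩ : ∃ n', n = 2 * n' + 1 := ⟨n / 2, by omega⟩
        have e : 4 * (X' * X' + X') + 1 = 4 * (m' * m') - (4 * (n' * n' + n') + 1) := by
          have h1' := h1
          rw [hX', hm', hn'] at h1'
          linear_combination h1'
        omega
      -- m odd, n even
      have hy2 : (y:ℤ) ^ 2 = m * n := by linarith [h2]
      have hYne : ((y:ℤ)) ≠ 0 := by exact_mod_cast hy.ne'
      have hmn0 : (0:ℤ) < m * n := by rw [← hy2]; exact sq_pos_of_ne_zero hYne
      have hmpos : 0 < m := by
        rcases lt_or_eq_of_le h6 with hm | hm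
        · exact hm
        · exfalso; rw [← hm] at hmn0; simp at hmn0
      have hnpos : 0 < n := pos_of_mul_pos_right hmn0 h6
      obtain ⟨p, hp⟩ := Int.sq_of_gcd_eq_one h4 hy2.symm
      have hmp : m = p ^ 2 := by
        rcases hp with hp | hp
        · exact hp
        · exfalso; linarith [sq_nonneg p]
      have h4' : Int.gcd n m = 1 := by rw [Int.gcd_comm]; exact h4
      obtain ⟨q, hq⟩ := Int.sq_of_gcd_eq_one h4' (by linarith [hy2] : n * m = (y:ℤ) ^ 2)
      have hnq : n = q ^ 2 := by
        rcases hq with hq | hq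
        · exact hq
        · exfalso; linarith [sq_nonneg q]
      have hqe : Even q := by
        have h2' : Even (q ^ 2) := by rw [← hnq]; exact Int.even_iff.mpr hn2
        exact (Int.even_pow.mp h2').1
      -- second Pythagorean triple: X^2 + (q^2)^2 = (p^2)^2
      have ht2 : PythagoreanTriple (x:ℤ) (q ^ 2) (p ^ 2) := by
        show (x:ℤ) * (x:ℤ) + q ^ 2 * (q ^ 2) = p ^ 2 * (p ^ 2)
        have h1' : (x:ℤ) ^ 2 = m ^ 2 - n ^ 2 := h1
        rw [hmp, hnq] at h1'
        linear_combination h1'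
      have hmn : IsCoprime m n := Int.isCoprime_iff_gcd_eq_one.mpr h4
      have hXn : IsCoprime ((x:ℤ)) n := by
        have ha' : IsCoprime (m ^ 2) n := hmn.pow_left
        have hb' : IsCoprime ((x:ℤ) ^ 2) n := by
          have he' : (x:ℤ) ^ 2 = m ^ 2 + n * (-n) := by rw [h1]; ring
          rw [he']; exact ha'.add_mul_left_left (-n)
        exact (IsCoprime.pow_left_iff (by norm_num)).mp hb'
      have hco2 : Int.gcd ((x:ℤ)) (q ^ 2) = 1 := by
        rw [← hnq]; exact Int.isCoprime_iff_gcd_eq_one.mp hXn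
      have hparity2 : (x:ℤ) % 2 = 1 := Int.odd_iff.mp hXodd
      have hppos : (0:ℤ) < p ^ 2 := by rw [← hmp]; exact hmpos
      obtain ⟨r, s, e1, e2, e3, e4, e5, e6⟩ :=
        ht2.coprime_classification' hco2 hparity2 hppos
      have hqne : q ≠ 0 := by intro h0; rw [h0] at hnq; simp at hnq; omega
      obtain ⟨t, hqt⟩ := hqe
      have htne : t ≠ 0 := by intro h0; rw [h0] at hqt; simp at hqt; exact hqne hqt
      have hrs : r * s = 2 * t ^ 2 := by
        have he2 : q ^ 2 = 2 * r * s := e2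
        rw [hqt] at he2; linarith [he2]
      have ht2pos : (0:ℤ) < t ^ 2 := sq_pos_of_ne_zero htne
      have hrspos : 0 < r * s := by rw [hrs]; linarith
      have hrpos : 0 < r := by
        rcases lt_or_eq_of_le e6 with hr | hr
        · exact hr
        · exfalso; rw [← hr] at hrspos; simp at hrspos
      have hspos : 0 < s := pos_of_mul_pos_right hrspos hrpos.le
      have hcop_rs : IsCoprime r s := Int.isCoprime_iff_gcd_eq_one.mpr e4
      -- split on which of r, s is even
      have key : ∃ c d : ℤ, c ≠ 0 ∧ d ≠ 0 ∧ p ^ 2 = c ^ 4 + 4 * d ^ 4 := by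
        rcases e5 with ⟨hr2, hs2⟩ | ⟨hr2, hs2⟩
        · -- r even
          obtain ⟨r', hr'⟩ : ∃ r', r = 2 * r' := ⟨r / 2, by omega⟩
          have hts : t ^ 2 = s * r' := by rw [hr'] at hrs; linarith [hrs]
          have hcop' : IsCoprime s r' := by
            have h0 : IsCoprime r' s := by
              have hh := hcop_rs; rw [hr'] at hh
              exact IsCoprime.of_mul_left_right hh
            exact h0.symm
          obtain ⟨c, hc⟩ := Int.sq_of_gcd_eq_one (Int.isCoprime_iff_gcd_eq_one.mp hcop') hts.symm
          have hr'pos : 0 < r' := by omega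
          have hsc : s = c ^ 2 := by
            rcases hc with hc | hc
            · exact hc
            · exfalso; linarith [sq_nonneg c]
          obtain ⟨d, hd⟩ := Int.sq_of_gcd_eq_one
            (Int.isCoprime_iff_gcd_eq_one.mp hcop'.symm) (by linarith [hts] : r' * s = t ^ 2)
          have hrd : r' = d ^ 2 := by
            rcases hd with hd | hd
            · exact hd
            · exfalso; linarith [sq_nonneg d]
          refine ⟨c, d, ?_, ?_, ?_⟩
          · intro h0; rw [h0] at hsc; simp at hsc; omega
          · intro h0; rw [h0] at hrd; simp at hrd; omega
          · have he3 : p ^ 2 = r ^ 2 + s ^ 2 := e3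
            rw [hr', hrd, hsc] at he3
            linear_combination he3
        · -- s even
          obtain ⟨s', hs'⟩ : ∃ s', s = 2 * s' := ⟨s / 2, by omega⟩
          have hts : t ^ 2 = r * s' := by rw [hs'] at hrs; linarith [hrs]
          have hcop' : IsCoprime r s' := by
            have hh := hcop_rs; rw [hs'] at hh
            exact IsCoprime.of_mul_right_right hh
          obtain ⟨c, hc⟩ := Int.sq_of_gcd_eq_one (Int.isCoprime_iff_gcd_eq_one.mp hcop') hts.symm
          have hs'pos : 0 < s' := by omega
          have hrc : r = c ^ 2 := by
            rcases hc with hc | hc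
            · exact hc
            · exfalso; linarith [sq_nonneg c]
          obtain ⟨d, hd⟩ := Int.sq_of_gcd_eq_one
            (Int.isCoprime_iff_gcd_eq_one.mp hcop'.symm) (by linarith [hts] : s' * r = t ^ 2)
          have hsd : s' = d ^ 2 := by
            rcases hd with hd | hd
            · exact hd
            · exfalso; linarith [sq_nonneg d]
          refine ⟨c, d, ?_, ?_, ?_⟩
          · intro h0; rw [h0] at hrc; simp at hrc; omega
          · intro h0; rw [h0] at hsd; simp at hsd; omega
          · have he3 : p ^ 2 = r ^ 2 + s ^ 2 := e3
            rw [hrc, hs', hsd] at he3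
            linear_combination he3
      obtain ⟨c, d, hcne, hdne, heq⟩ := key
      -- descent
      have hpne : p ≠ 0 := by intro h0; rw [h0] at hmp; simp at hmp; omega
      have habs : ((p.natAbs : ℤ)) ^ 2 = ((c.natAbs : ℤ)) ^ 4 + 4 * ((d.natAbs : ℤ)) ^ 4 := by
        rw [← Int.abs_eq_natAbs, ← Int.abs_eq_natAbs, ← Int.abs_eq_natAbs,
          sq_abs, abs_pow_four, abs_pow_four]
        exact heq
      have hnat : p.natAbs ^ 2 = c.natAbs ^ 4 + 4 * d.natAbs ^ 4 := by exact_mod_cast habs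
      have hbound : p.natAbs < z := by
        have hb1 : ((p.natAbs : ℤ)) ≤ p ^ 2 := by
          rw [← Int.abs_eq_natAbs, ← sq_abs]
          exact le_self_pow₀ (Int.one_le_abs hpne) two_ne_zero
        have hb2 : p ^ 2 < (z:ℤ) := by
          rw [h3, ← hmp]
          have hm1 : m ≤ m ^ 2 := le_self_pow₀ (by omega) two_ne_zero
          have hn1 : (0:ℤ) < n ^ 2 := sq_pos_of_ne_zero hnpos.ne'
          linarith
        have : ((p.natAbs : ℤ)) < (z:ℤ) := lt_of_le_of_lt hb1 hb2
        exact_mod_cast this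
      exact IH p.natAbs hbound c.natAbs d.natAbs
        (Int.natAbs_pos.mpr hcne) (Int.natAbs_pos.mpr hdne) hnat
  · -- non-coprime: divide out gcd
    have hg1 : 1 < Nat.gcd x y := by
      have : 0 < Nat.gcd x y := Nat.gcd_pos_of_pos_left y hx
      omega
    obtain ⟨x', hx'⟩ : Nat.gcd x y ∣ x := Nat.gcd_dvd_left x y
    obtain ⟨y', hy'⟩ : Nat.gcd x y ∣ y := Nat.gcd_dvd_right x y
    set g := Nat.gcd x y with hgdef
    have hx'pos : 0 < x' := by
      rcases Nat.eq_zero_or_pos x' with rfl | h' 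
      · omega
      · exact h'
    have hy'pos : 0 < y' := by
      rcases Nat.eq_zero_or_pos y' with rfl | h'
      · omega
      · exact h'
    have hfac : z ^ 2 = (g ^ 2) ^ 2 * (x' ^ 4 + 4 * y' ^ 4) := by
      rw [h, hx', hy']; ring
    have hdvd : g ^ 2 ∣ z := by
      have hd : (g ^ 2) ^ 2 ∣ z ^ 2 := ⟨_, hfac⟩
      exact (Nat.pow_dvd_pow_iff two_ne_zero).mp hd
    obtain ⟨w, hw⟩ := hdvd
    have hweq : w ^ 2 = x' ^ 4 + 4 * y' ^ 4 := by
      have h4 : (g ^ 2) ^ 2 * w ^ 2 = (g ^ 2) ^ 2 * (x' ^ 4 + 4 * y' ^ 4) := by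
        rw [← hfac, hw]; ring
      exact Nat.eq_of_mul_eq_mul_left (by positivity) h4
    have hwpos : 0 < w := by
      rcases Nat.eq_zero_or_pos w with rfl | h'
      · exfalso
        have : 0 < x' ^ 4 := by positivity
        simp at hweq; omega
      · exact h'
    have hwlt : w < z := by
      rw [hw]
      calc w = 1 * w := (one_mul w).symm
      _ < g ^ 2 * w := by
        refine (Nat.mul_lt_mul_right hwpos).mpr ?_
        nlinarith
    exact IH w hwlt x' y' hx'pos hy'pos hweq

theorem stmt_11 : ¬ ∃ z x y : ℕ, 0 < z ∧ 0 < x ∧ 0 < y ∧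
    Even x ∧ Odd y ∧ z^2 = x^4 + 4*y^4 := by
  rintro ⟨z, x, y, hz, hx, hy, -, -, h⟩
  exact no_sol_s11 z x y hx hy h
end

section
/- There do not exist positive integers x, y, t such that t^2 = x^2 + x^2 + y^2 (a Pythagorean box with two adjacent equal edges x) together with a positive integer d satisfying d^2 = x^2 + y^2. -/
set_option maxHeartbeats 1000000

/-- Auxiliary descent step: from `a^2 = 4p^4 + q^4` (with the evident coprimality and
parity conditions) produce a strictly smaller solution of `s^4 + w^2 = r^4`. -/
lemma aux_step_17 (a : ℕ) (p q : ℤ) (ha2 : 2 ≤ a) (hp : p ≠ 0) (hq : q ≠ 0)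
    (hqodd : q % 2 = 1) (hgcd : Int.gcd (q ^ 2) (2 * p ^ 2) = 1)
    (ha : (a : ℤ) ^ 2 = 4 * p ^ 4 + q ^ 4) :
    ∃ r s w : ℕ, 0 < s ∧ 0 < w ∧ s ^ 4 + w ^ 2 = r ^ 4 ∧ r < a := by
  have htr : PythagoreanTriple (q ^ 2) (2 * p ^ 2) (a : ℤ) := by
    unfold PythagoreanTriple
    linear_combination -ha
  have hq2odd : q ^ 2 % 2 = 1 := by
    obtain ⟨j, hj⟩ : ∃ j, q = 2 * j + 1 := ⟨q / 2, by omega⟩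
    have h : q ^ 2 = 2 * (2 * j ^ 2 + 2 * j) + 1 := by rw [hj]; ring
    omega
  have hza : (0 : ℤ) < (a : ℤ) := by exact_mod_cast (show 0 < a by omega)
  obtain ⟨u, v, h1, h2, h3, huv, hpar, hu⟩ := htr.coprime_classification' hgcd hq2odd hza
  have h2' : p ^ 2 = u * v := by linarith
  have hpp : 0 < p ^ 2 := by positivity
  have hu0 : 0 < u := by
    rcases lt_or_eq_of_le hu with h | h
    · exact h
    · exfalso
      have hz : p ^ 2 = 0 := by rw [← h] at h2'; simpa using h2'
      exact hp ((pow_eq_zero_iff two_ne_zero).mp hz)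
  have huvpos : 0 < u * v := by rw [← h2']; exact hpp
  have hv0 : 0 < v := by
    rcases mul_pos_iff.mp huvpos with ⟨_, h⟩ | ⟨h, _⟩
    · exact h
    · omega
  obtain ⟨r0, hr0⟩ := Int.sq_of_gcd_eq_one huv h2'.symm
  have hru : u = r0 ^ 2 := by
    rcases hr0 with h | h
    · exact h
    · exfalso; linarith [sq_nonneg r0]
  have hvu : v * u = p ^ 2 := by linarith [h2']
  obtain ⟨s0, hs0⟩ := Int.sq_of_gcd_eq_one (by rwa [Int.gcd_comm]) hvu
  have hsv : v = s0 ^ 2 := by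
    rcases hs0 with h | h
    · exact h
    · exfalso; linarith [sq_nonneg s0]
  have hr0ne : r0 ≠ 0 := by
    rintro rfl; rw [hru] at hu0; simp at hu0
  have hs0ne : s0 ≠ 0 := by
    rintro rfl; rw [hsv] at hv0; simp at hv0
  have c1 : ((r0.natAbs : ℤ)) ^ 2 = r0 ^ 2 := Int.natAbs_sq r0
  have c2 : ((s0.natAbs : ℤ)) ^ 2 = s0 ^ 2 := Int.natAbs_sq s0
  have c3 : ((q.natAbs : ℤ)) ^ 2 = q ^ 2 := Int.natAbs_sq q
  have e1 : ((s0.natAbs : ℤ)) ^ 4 = s0 ^ 4 := by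
    have h4 : ((s0.natAbs : ℤ)) ^ 4 = (((s0.natAbs : ℤ)) ^ 2) ^ 2 := by ring
    rw [h4, c2]; ring
  have e2 : ((r0.natAbs : ℤ)) ^ 4 = r0 ^ 4 := by
    have h4 : ((r0.natAbs : ℤ)) ^ 4 = (((r0.natAbs : ℤ)) ^ 2) ^ 2 := by ring
    rw [h4, c1]; ring
  refine ⟨r0.natAbs, s0.natAbs, q.natAbs, ?_, ?_, ?_, ?_⟩
  · simpa using hs0ne
  · simpa using hq
  · -- s^4 + w^2 = r^4, via casting to ℤ
    have key : s0 ^ 4 + q ^ 2 = r0 ^ 4 := by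
      have h5 : q ^ 2 = (r0 ^ 2) ^ 2 - (s0 ^ 2) ^ 2 := by rw [← hru, ← hsv]; exact h1
      linear_combination h5
    have h6 : ((s0.natAbs ^ 4 + q.natAbs ^ 2 : ℕ) : ℤ) = ((r0.natAbs ^ 4 : ℕ) : ℤ) := by
      rw [Nat.cast_add, Nat.cast_pow, Nat.cast_pow, Nat.cast_pow, e1, e2, c3]
      exact key
    exact_mod_cast h6
  · -- r < a
    have hru' : ((r0.natAbs : ℤ)) ^ 4 = u ^ 2 := by rw [e2, hru]; ring
    have hlt : ((r0.natAbs : ℤ)) ^ 4 < (a : ℤ) := by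
      rw [hru', h3]
      have hvv : (0:ℤ) < v ^ 2 := by positivity
      linarith
    have hlt' : r0.natAbs ^ 4 < a := by exact_mod_cast hlt
    have hr1 : 1 ≤ r0.natAbs := Int.natAbs_pos.mpr hr0ne
    calc r0.natAbs ≤ r0.natAbs ^ 4 := Nat.le_self_pow (by norm_num) _
      _ < a := hlt'

/-- No positive solutions to `b^4 + c^2 = a^4` (Fermat). -/
lemma no_pow4_diff_sq_17 : ∀ a b c : ℕ, 0 < b → 0 < c → b ^ 4 + c ^ 2 = a ^ 4 → False := by
  intro a
  induction a using Nat.strong_induction_on with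
  | _ a IH =>
    intro b c hb hc heq
    have hb4 : 1 ≤ b ^ 4 := Nat.one_le_pow _ _ hb
    have hc2 : 1 ≤ c ^ 2 := Nat.one_le_pow _ _ hc
    have ha2 : 2 ≤ a := by
      by_contra h
      have h1 : a ^ 4 ≤ 1 := by interval_cases a <;> norm_num
      omega
    have ha0 : 0 < a := by omega
    -- Reduce to the case gcd a b = 1
    by_cases hg : Nat.gcd a b = 1
    · -- coprime case
      have hcopbc : Nat.Coprime b c := by
        have hab4 : Nat.Coprime (a ^ 4) b := Nat.Coprime.pow_left 4 hg
        have d1 : Nat.gcd b c ∣ b := Nat.gcd_dvd_left _ _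
        have d2 : Nat.gcd b c ∣ c := Nat.gcd_dvd_right _ _
        have d3 : Nat.gcd b c ∣ a ^ 4 := by
          rw [← heq]
          exact Nat.dvd_add (d1.trans (dvd_pow_self b (by norm_num)))
            (d2.trans (dvd_pow_self c (by norm_num)))
        have hd : Nat.gcd b c ∣ 1 := by
          calc Nat.gcd b c ∣ Nat.gcd (a ^ 4) b := Nat.dvd_gcd d3 d1
            _ = 1 := hab4
        exact Nat.dvd_one.mp hd
      have hcop2 : Int.gcd ((b : ℤ) ^ 2) ((c : ℤ)) = 1 := by
        have h7 : Nat.Coprime (b ^ 2) c := hcopbc.pow_left _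
        have h8 : Int.gcd ((b ^ 2 : ℕ) : ℤ) ((c : ℕ) : ℤ) = 1 := by
          rw [Int.gcd_natCast_natCast]; exact h7
        push_cast at h8
        exact h8
      have heqZ : (b : ℤ) ^ 4 + (c : ℤ) ^ 2 = (a : ℤ) ^ 4 := by exact_mod_cast heq
      rcases Nat.even_or_odd b with hbe | hbo
      · -- b even, c odd
        have hco : c % 2 = 1 := by
          rcases Nat.even_or_odd c with hce | hco
          · exfalso
            obtain ⟨b1, rfl⟩ := hbe
            obtain ⟨c1, rfl⟩ := hce
            have h9 : 2 ∣ Nat.gcd (b1 + b1) (c1 + c1) := Nat.dvd_gcd ⟨b1, by ring⟩ ⟨c1, by ring⟩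
            rw [hcopbc] at h9
            omega
          · obtain ⟨j, hj⟩ := hco; omega
        have hcoZ : (c : ℤ) % 2 = 1 := by omega
        have htr : PythagoreanTriple ((c : ℤ)) ((b : ℤ) ^ 2) ((a : ℤ) ^ 2) := by
          unfold PythagoreanTriple
          linear_combination heqZ
        have hcop2' : Int.gcd ((c : ℤ)) ((b : ℤ) ^ 2) = 1 := by
          rwa [Int.gcd_comm]
        have hza : (0 : ℤ) < (a : ℤ) ^ 2 := by positivity
        obtain ⟨m, n, h1, h2, h3, hmn, hpar, hm⟩ :=
          htr.coprime_classification' hcop2' hcoZ hza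
        -- h1 : c = m^2 - n^2, h2 : b^2 = 2 m n, h3 : a^2 = m^2+n^2
        have hbZpos : (0 : ℤ) < (b : ℤ) ^ 2 := by
          have hbb : (0 : ℤ) < (b : ℤ) := by exact_mod_cast hb
          positivity
        have hm0 : 0 < m := by
          rcases lt_or_eq_of_le hm with h | h
          · exact h
          · exfalso; rw [← h] at h2; simp at h2; omega
        have h2mn : 2 * (m * n) = (b : ℤ) ^ 2 := by linear_combination -h2
        have hmn0 : 0 < m * n := by linarith
        have hn0 : 0 < n := by
          rcases mul_pos_iff.mp hmn0 with ⟨_, h⟩ | ⟨h, _⟩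
          · exact h
          · omega
        obtain ⟨b1, hb1⟩ : ∃ b1, b = 2 * b1 := by
          obtain ⟨b1, hb1⟩ := hbe; exact ⟨b1, by omega⟩
        have hb1Z : (b : ℤ) = 2 * (b1 : ℤ) := by exact_mod_cast hb1
        have hb1pos : (0 : ℤ) < (b1 : ℤ) := by
          have : 0 < b1 := by omega
          exact_mod_cast this
        rcases hpar with ⟨hme, hno⟩ | ⟨hmo, hne⟩
        · -- m even, n odd : m = 2k, b1^2 = k*n, k = p^2, n = q^2
          obtain ⟨k, hk⟩ : ∃ k, m = 2 * k := ⟨m / 2, by omega⟩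
          have hkn : k * n = (b1 : ℤ) ^ 2 := by
            have h10 : (2 * (b1 : ℤ)) ^ 2 = 2 * (2 * k) * n := by rw [← hb1Z, ← hk]; exact h2
            have h10' : 4 * (k * n) = 4 * ((b1 : ℤ) ^ 2) := by linear_combination -h10
            linarith
          have hk0 : 0 < k := by omega
          have hgkn : Int.gcd k n = 1 := by
            have d1 : (Int.gcd k n : ℤ) ∣ m := (Int.gcd_dvd_left _ _).trans ⟨2, by rw [hk]; ring⟩
            have d2 : (Int.gcd k n : ℤ) ∣ n := Int.gcd_dvd_right _ _
            have d3 : (Int.gcd k n : ℤ) ∣ (Int.gcd m n : ℤ) := Int.dvd_coe_gcd d1 d2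
            rw [hmn] at d3
            exact Nat.dvd_one.mp (by exact_mod_cast d3)
          obtain ⟨p, hpk⟩ := Int.sq_of_gcd_eq_one hgkn hkn
          have hkp : k = p ^ 2 := by
            rcases hpk with h | h
            · exact h
            · exfalso; linarith [sq_nonneg p]
          have hnk : n * k = (b1 : ℤ) ^ 2 := by linarith [hkn]
          obtain ⟨q, hqn⟩ := Int.sq_of_gcd_eq_one (by rwa [Int.gcd_comm]) hnk
          have hnq : n = q ^ 2 := by
            rcases hqn with h | h
            · exact h
            · exfalso; linarith [sq_nonneg q]
          have hpne : p ≠ 0 := by rintro rfl; rw [hkp] at hk0; simp at hk0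
          have hqne : q ≠ 0 := by rintro rfl; rw [hnq] at hn0; simp at hn0
          have hqodd : q % 2 = 1 := by
            rcases Int.even_or_odd q with ⟨j, hj⟩ | ⟨j, hj⟩
            · exfalso
              have h11 : n = 2 * (2 * j ^ 2) := by rw [hnq, hj]; ring
              omega
            · omega
          have hm2p : m = 2 * p ^ 2 := by rw [hk, hkp]
          have hgg : Int.gcd (q ^ 2) (2 * p ^ 2) = 1 := by
            rw [← hnq, ← hm2p, Int.gcd_comm]; exact hmn
          have haZ : (a : ℤ) ^ 2 = 4 * p ^ 4 + q ^ 4 := by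
            rw [h3, hm2p, hnq]; ring
          obtain ⟨r, s, w, hs, hw, heq', hr⟩ := aux_step_17 a p q ha2 hpne hqne hqodd hgg haZ
          exact IH r hr s w hs hw heq'
        · -- m odd, n even : n = 2k, b1^2 = m*k, m = p^2, k = q^2
          obtain ⟨k, hk⟩ : ∃ k, n = 2 * k := ⟨n / 2, by omega⟩
          have hkn : m * k = (b1 : ℤ) ^ 2 := by
            have h10 : (2 * (b1 : ℤ)) ^ 2 = 2 * m * (2 * k) := by rw [← hb1Z, ← hk]; exact h2
            have h10' : 4 * (m * k) = 4 * ((b1 : ℤ) ^ 2) := by linear_combination -h10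
            linarith
          have hk0 : 0 < k := by omega
          have hgkn : Int.gcd m k = 1 := by
            have d1 : (Int.gcd m k : ℤ) ∣ m := Int.gcd_dvd_left _ _
            have d2 : (Int.gcd m k : ℤ) ∣ n := (Int.gcd_dvd_right _ _).trans ⟨2, by rw [hk]; ring⟩
            have d3 : (Int.gcd m k : ℤ) ∣ (Int.gcd m n : ℤ) := Int.dvd_coe_gcd d1 d2
            rw [hmn] at d3
            exact Nat.dvd_one.mp (by exact_mod_cast d3)
          obtain ⟨p, hpk⟩ := Int.sq_of_gcd_eq_one hgkn hkn
          have hmp : m = p ^ 2 := by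
            rcases hpk with h | h
            · exact h
            · exfalso; linarith [sq_nonneg p]
          have hnk : k * m = (b1 : ℤ) ^ 2 := by linarith [hkn]
          obtain ⟨q, hqn⟩ := Int.sq_of_gcd_eq_one (by rwa [Int.gcd_comm]) hnk
          have hkq : k = q ^ 2 := by
            rcases hqn with h | h
            · exact h
            · exfalso; linarith [sq_nonneg q]
          have hpne : p ≠ 0 := by rintro rfl; rw [hmp] at hm0; simp at hm0
          have hqne : q ≠ 0 := by rintro rfl; rw [hkq] at hk0; simp at hk0
          have hpodd : p % 2 = 1 := by
            rcases Int.even_or_odd p with ⟨j, hj⟩ | ⟨j, hj⟩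
            · exfalso
              have h11 : m = 2 * (2 * j ^ 2) := by rw [hmp, hj]; ring
              omega
            · omega
          have hn2q : n = 2 * q ^ 2 := by rw [hk, hkq]
          have hgg : Int.gcd (p ^ 2) (2 * q ^ 2) = 1 := by
            rw [← hmp, ← hn2q]; exact hmn
          have haZ : (a : ℤ) ^ 2 = 4 * q ^ 4 + p ^ 4 := by
            rw [h3, hmp, hn2q]; ring
          obtain ⟨r, s, w, hs, hw, heq', hr⟩ := aux_step_17 a q p ha2 hqne hpne hpodd hgg haZ
          exact IH r hr s w hs hw heq'
      · -- b odd
        have hboZ : (b : ℤ) ^ 2 % 2 = 1 := by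
          obtain ⟨j, hj⟩ := hbo
          have hjZ : (b : ℤ) = 2 * (j : ℤ) + 1 := by exact_mod_cast hj
          have h : (b : ℤ) ^ 2 = 2 * (2 * (j : ℤ) ^ 2 + 2 * (j : ℤ)) + 1 := by rw [hjZ]; ring
          omega
        have htr : PythagoreanTriple ((b : ℤ) ^ 2) ((c : ℤ)) ((a : ℤ) ^ 2) := by
          unfold PythagoreanTriple
          linear_combination heqZ
        have hza : (0 : ℤ) < (a : ℤ) ^ 2 := by positivity
        obtain ⟨m, n, h1, h2, h3, hmn, hpar, hm⟩ :=
          htr.coprime_classification' hcop2 hboZ hza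
        -- h1 : b^2 = m^2 - n^2, h2 : c = 2 m n, h3 : a^2 = m^2 + n^2
        have hn0 : n ≠ 0 := by
          rintro rfl
          rw [mul_zero] at h2
          have hcc : c = 0 := by exact_mod_cast h2
          omega
        have key : n ^ 4 + ((a : ℤ) * (b : ℤ)) ^ 2 = m ^ 4 := by
          linear_combination ((a : ℤ) ^ 2) * h1 + (m ^ 2 - n ^ 2) * h3
        set M := m.natAbs with hM
        set N := n.natAbs with hN
        have keyN : N ^ 4 + (a * b) ^ 2 = M ^ 4 := by
          have cm : ((M : ℤ)) ^ 4 = m ^ 4 := by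
            have h13 : ((M : ℤ)) ^ 4 = (((M : ℤ)) ^ 2) ^ 2 := by ring
            rw [h13, hM, Int.natAbs_sq]; ring
          have cn : ((N : ℤ)) ^ 4 = n ^ 4 := by
            have h13 : ((N : ℤ)) ^ 4 = (((N : ℤ)) ^ 2) ^ 2 := by ring
            rw [h13, hN, Int.natAbs_sq]; ring
          have h14 : ((N ^ 4 + (a * b) ^ 2 : ℕ) : ℤ) = ((M ^ 4 : ℕ) : ℤ) := by
            rw [Nat.cast_add, Nat.cast_pow, Nat.cast_pow, Nat.cast_pow, cn, cm]
            push_cast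
            exact key
          exact_mod_cast h14
        have hMlt : M < a := by
          have hnn : (0 : ℤ) < n ^ 2 := by positivity
          have hm2 : m ^ 2 < (a : ℤ) ^ 2 := by linarith [h3, hnn]
          have hM2 : (M : ℤ) ^ 2 < (a : ℤ) ^ 2 := by rw [hM, Int.natAbs_sq]; exact hm2
          have hM2' : M ^ 2 < a ^ 2 := by exact_mod_cast hM2
          by_contra hcon
          push_neg at hcon
          have := Nat.pow_le_pow_left hcon 2
          omega
        have hNpos : 0 < N := Int.natAbs_pos.mpr hn0
        have habpos : 0 < a * b := Nat.mul_pos ha0 hb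
        exact IH M hMlt N (a * b) hNpos habpos keyN
    · -- gcd reduction
      set g := Nat.gcd a b with hgdef
      have hgpos : 0 < g := Nat.gcd_pos_of_pos_left _ ha0
      have hg2 : 2 ≤ g := by omega
      obtain ⟨a1, ha1⟩ : g ∣ a := Nat.gcd_dvd_left _ _
      obtain ⟨b1, hb1⟩ : g ∣ b := Nat.gcd_dvd_right _ _
      have hcZ : ((c : ℤ)) ^ 2 = ((g : ℤ)) ^ 4 * ((a1 : ℤ) ^ 4 - (b1 : ℤ) ^ 4) := by
        have heqZ : (b : ℤ) ^ 4 + (c : ℤ) ^ 2 = (a : ℤ) ^ 4 := by exact_mod_cast heq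
        have ha1Z : (a : ℤ) = g * a1 := by exact_mod_cast ha1
        have hb1Z : (b : ℤ) = g * b1 := by exact_mod_cast hb1
        rw [ha1Z, hb1Z] at heqZ
        linear_combination heqZ
      have hdvd : ((g : ℤ) ^ 2) ^ 2 ∣ ((c : ℤ)) ^ 2 := ⟨(a1 : ℤ) ^ 4 - (b1 : ℤ) ^ 4, by rw [hcZ]; ring⟩
      have hdvd2 : (g ^ 2 : ℕ) ∣ c := by
        have h15 : ((g ^ 2 : ℕ) : ℤ) ^ 2 ∣ ((c : ℕ) : ℤ) ^ 2 := by push_cast; exact hdvd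
        have h16 : ((g ^ 2 : ℕ) ^ 2 : ℕ) ∣ (c ^ 2 : ℕ) := by exact_mod_cast h15
        exact (Nat.pow_dvd_pow_iff (by norm_num)).mp h16
      obtain ⟨c1, hc1⟩ := hdvd2
      have ha1pos : 0 < a1 := by
        rcases Nat.eq_zero_or_pos a1 with h | h
        · exfalso; rw [h, mul_zero] at ha1; omega
        · exact h
      have hb1pos : 0 < b1 := by
        rcases Nat.eq_zero_or_pos b1 with h | h
        · exfalso; rw [h, mul_zero] at hb1; omega
        · exact h
      have hc1pos : 0 < c1 := by
        rcases Nat.eq_zero_or_pos c1 with h | h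
        · exfalso; rw [h, mul_zero] at hc1; omega
        · exact h
      have heq1 : b1 ^ 4 + c1 ^ 2 = a1 ^ 4 := by
        have hg4 : (0 : ℕ) < g ^ 4 := by positivity
        apply Nat.eq_of_mul_eq_mul_left hg4
        have h17 : (g * b1) ^ 4 + (g ^ 2 * c1) ^ 2 = (g * a1) ^ 4 := by
          rw [← ha1, ← hb1, ← hc1]; exact heq
        calc g ^ 4 * (b1 ^ 4 + c1 ^ 2) = (g * b1) ^ 4 + (g ^ 2 * c1) ^ 2 := by ring
          _ = (g * a1) ^ 4 := h17
          _ = g ^ 4 * a1 ^ 4 := by ring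
      have ha1lt : a1 < a := by
        rw [ha1]
        calc a1 < 2 * a1 := by omega
          _ ≤ g * a1 := Nat.mul_le_mul_right _ hg2
      exact IH a1 ha1lt b1 c1 hb1pos hc1pos heq1

theorem stmt_17 : ¬ ∃ x y t d : ℕ, 0 < x ∧ 0 < y ∧ 0 < t ∧ 0 < d ∧
    t^2 = x^2 + x^2 + y^2 ∧ d^2 = x^2 + y^2 := by
  rintro ⟨x, y, t, d, hx, hy, ht, hd, h1, h2⟩
  -- d^4 = x^4 + (t*y)^2
  have key : x ^ 4 + (t * y) ^ 2 = d ^ 4 := by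
    have h1Z : (t : ℤ) ^ 2 = (x : ℤ) ^ 2 + (x : ℤ) ^ 2 + (y : ℤ) ^ 2 := by exact_mod_cast h1
    have h2Z : (d : ℤ) ^ 2 = (x : ℤ) ^ 2 + (y : ℤ) ^ 2 := by exact_mod_cast h2
    have h3 : ((x ^ 4 + (t * y) ^ 2 : ℕ) : ℤ) = ((d ^ 4 : ℕ) : ℤ) := by
      push_cast
      linear_combination (y : ℤ) ^ 2 * h1Z - ((d : ℤ) ^ 2 + (x : ℤ) ^ 2 + (y : ℤ) ^ 2) * h2Z
    exact_mod_cast h3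
  exact no_pow4_diff_sq_17 d x (t * y) hx (Nat.mul_pos ht hy) key
end
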